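/- arXiv:2509.03105 — 9 statements merged into one kernel-verified Lean document; each statement's English description precedes it below -/
import Mathlib

section
/- For all nonzero complex numbers z₁ and z₂, one has |z₁ + z₂| ≥ (|z₁| + |z₂|)·|cos((arg z₁ − arg z₂)/2)|. -/
theorem stmt_0 (z₁ z₂ : ℂ) (hz₁ : z₁ ≠ 0) (hz₂ : z₂ ≠ 0) :
    (‖z₁‖ + ‖z₂‖) * |Real.cos ((z₁.arg - z₂.arg) / 2)| ≤
      ‖z₁ + z₂‖ := by
  set r₁ := ‖z₁‖ with hr₁def
  set r₂ := ‖z₂‖ with hr₂def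
  have h₁ : 0 < r₁ := norm_pos_iff.mpr hz₁
  have h₂ : 0 < r₂ := norm_pos_iff.mpr hz₂
  have hc1 : Real.cos z₁.arg = z₁.re / r₁ := Complex.cos_arg hz₁
  have hc2 : Real.cos z₂.arg = z₂.re / r₂ := Complex.cos_arg hz₂
  have hs1 : Real.sin z₁.arg = z₁.im / r₁ := Complex.sin_arg z₁
  have hs2 : Real.sin z₂.arg = z₂.im / r₂ := Complex.sin_arg z₂
  have hr1 : r₁ ^ 2 = z₁.re ^ 2 + z₁.im ^ 2 := by
    rw [hr₁def, Complex.sq_norm, Complex.normSq_apply]; ring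
  have hr2 : r₂ ^ 2 = z₂.re ^ 2 + z₂.im ^ 2 := by
    rw [hr₂def, Complex.sq_norm, Complex.normSq_apply]; ring
  have hL : 0 ≤ (r₁ + r₂) * |Real.cos ((z₁.arg - z₂.arg) / 2)| :=
    mul_nonneg (by positivity) (abs_nonneg _)
  have hR : 0 ≤ ‖z₁ + z₂‖ := norm_nonneg _
  have hCS : z₁.re * z₂.re + z₁.im * z₂.im ≤ r₁ * r₂ := by
    nlinarith [sq_nonneg (z₁.re * z₂.im - z₂.re * z₁.im), mul_pos h₁ h₂,
      sq_nonneg (r₁ * r₂ - z₁.re * z₂.re - z₁.im * z₂.im)]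
  have hsq : ((r₁ + r₂) * |Real.cos ((z₁.arg - z₂.arg) / 2)|) ^ 2 ≤
      ‖z₁ + z₂‖ ^ 2 := by
    have hcos : Real.cos ((z₁.arg - z₂.arg) / 2) ^ 2 =
        (1 + Real.cos (z₁.arg - z₂.arg)) / 2 := by
      rw [Real.cos_sq]
      rw [show 2 * ((z₁.arg - z₂.arg) / 2) = z₁.arg - z₂.arg by ring]
      ring
    rw [mul_pow, sq_abs, hcos, Real.cos_sub, hc1, hc2, hs1, hs2,
      Complex.sq_norm, Complex.normSq_apply, Complex.add_re, Complex.add_im]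
    have h12 : (0:ℝ) < r₁ * r₂ := mul_pos h₁ h₂
    have key : (1 + (z₁.re / r₁ * (z₂.re / r₂) + z₁.im / r₁ * (z₂.im / r₂))) / 2 =
        (r₁ * r₂ + (z₁.re * z₂.re + z₁.im * z₂.im)) / (2 * (r₁ * r₂)) := by
      rw [div_eq_div_iff (by norm_num : (2:ℝ) ≠ 0) (by positivity : 2 * (r₁ * r₂) ≠ 0)]
      field_simp
    rw [key, mul_div_assoc', div_le_iff₀ (by positivity : (0:ℝ) < 2 * (r₁ * r₂))]
    have h2r : ((z₁.re + z₂.re) * (z₁.re + z₂.re) + (z₁.im + z₂.im) * (z₁.im + z₂.im)) *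
          (2 * (r₁ * r₂)) -
          (r₁ + r₂) ^ 2 * (r₁ * r₂ + (z₁.re * z₂.re + z₁.im * z₂.im)) =
        (r₁ - r₂) ^ 2 * (r₁ * r₂ - (z₁.re * z₂.re + z₁.im * z₂.im)) := by
      linear_combination (-2 * r₁ * r₂) * hr1 + (-2 * r₁ * r₂) * hr2
    nlinarith [mul_nonneg (sq_nonneg (r₁ - r₂)) (sub_nonneg.2 hCS)]
  calc (r₁ + r₂) * |Real.cos ((z₁.arg - z₂.arg) / 2)|
      = Real.sqrt (((r₁ + r₂) * |Real.cos ((z₁.arg - z₂.arg) / 2)|) ^ 2) :=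
        (Real.sqrt_sq hL).symm
    _ ≤ Real.sqrt (‖z₁ + z₂‖ ^ 2) := Real.sqrt_le_sqrt hsq
    _ = ‖z₁ + z₂‖ := Real.sqrt_sq hR
end

section
/- For all nonzero complex numbers z₁ and z₂ with |arg z₁| + |arg z₂| < π, one has z₁ + z₂ ≠ 0 and |arg(z₁ + z₂)| ≤ max(|arg z₁|, |arg z₂|). -/
open Real

theorem stmt_3 (z₁ z₂ : ℂ) (hz₁ : z₁ ≠ 0) (hz₂ : z₂ ≠ 0)
    (h : |z₁.arg| + |z₂.arg| < Real.pi) :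
    z₁ + z₂ ≠ 0 ∧ |(z₁ + z₂).arg| ≤ max |z₁.arg| |z₂.arg| := by
  have hπ := Real.pi_pos
  set a₁ := z₁.arg with ha₁
  set a₂ := z₂.arg with ha₂
  set A := min a₁ a₂ with hA
  set B := max a₁ a₂ with hB
  set c := (A + B) / 2 with hc
  set d := (B - A) / 2 with hd
  set M := max |a₁| |a₂| with hM
  have hAB : A ≤ B := min_le_max
  have habs : |a₁ - a₂| ≤ |a₁| + |a₂| := by
    have := abs_add_le a₁ (-a₂); simpa [sub_eq_add_neg] using this
  have hBA : B - A < π := by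
    rcases le_total a₁ a₂ with h' | h' <;>
      simp [hA, hB, min_eq_left, max_eq_right, min_eq_right, max_eq_left, h'] at * <;>
      rcases abs_cases (a₁ - a₂) with ⟨e, _⟩ | ⟨e, _⟩ <;> linarith
  have hd0 : 0 ≤ d := by simp [hd]; linarith
  have hdlt : d < π / 2 := by simp [hd]; linarith
  have hAM : -M ≤ A := by
    have h1 := neg_abs_le a₁; have h2 := neg_abs_le a₂
    have h3 := le_max_left |a₁| |a₂|; have h4 := le_max_right |a₁| |a₂|
    rcases min_cases a₁ a₂ with ⟨e, _⟩ | ⟨e, _⟩ <;> rw [hA, e] <;> [linarith; linarith]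
  have hBM : B ≤ M := max_le (le_trans (le_abs_self _) (le_max_left _ _))
    (le_trans (le_abs_self _) (le_max_right _ _))
  have hMlt : M < π := by
    have h1 := abs_nonneg a₁; have h2 := abs_nonneg a₂
    exact max_lt (by linarith) (by linarith)
  have hcd1 : c - d = A := by rw [hc, hd]; ring
  have hcd2 : c + d = B := by rw [hc, hd]; ring
  have hδ : ∀ a : ℝ, A ≤ a → a ≤ B → |a - c| ≤ d := fun a h1 h2 =>
    abs_le.mpr ⟨by linarith, by linarith⟩
  have hδ₁ : |a₁ - c| ≤ d := hδ a₁ (min_le_left _ _) (le_max_left _ _)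
  have hδ₂ : |a₂ - c| ≤ d := hδ a₂ (min_le_right _ _) (le_max_right _ _)
  set r₁ := ‖z₁‖ with hr₁
  set r₂ := ‖z₂‖ with hr₂
  have hr₁0 : 0 < r₁ := norm_pos_iff.mpr hz₁
  have hr₂0 : 0 < r₂ := norm_pos_iff.mpr hz₂
  set w := (z₁ + z₂) * Complex.exp (-(c : ℂ) * Complex.I) with hw
  have e₁ : z₁ = (r₁ : ℂ) * Complex.exp ((a₁ : ℂ) * Complex.I) :=
    (Complex.norm_mul_exp_arg_mul_I z₁).symm
  have e₂ : z₂ = (r₂ : ℂ) * Complex.exp ((a₂ : ℂ) * Complex.I) :=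
    (Complex.norm_mul_exp_arg_mul_I z₂).symm
  have hwe : w = (r₁ : ℂ) * Complex.exp ((↑(a₁ - c) : ℂ) * Complex.I)
      + (r₂ : ℂ) * Complex.exp ((↑(a₂ - c) : ℂ) * Complex.I) := by
    rw [hw]; nth_rewrite 1 [e₁, e₂]
    rw [add_mul, mul_assoc, mul_assoc, ← Complex.exp_add, ← Complex.exp_add]
    push_cast; ring_nf
  have hwre : w.re = r₁ * Real.cos (a₁ - c) + r₂ * Real.cos (a₂ - c) := by
    rw [hwe]
    simp only [Complex.exp_mul_I, Complex.add_re, Complex.add_im, Complex.mul_re,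
      Complex.mul_im, Complex.ofReal_re, Complex.ofReal_im, Complex.I_re, Complex.I_im,
      Complex.ofReal_sub, Complex.cos_ofReal_re, Complex.cos_ofReal_im,
      Complex.sin_ofReal_re, Complex.sin_ofReal_im, ← Complex.ofReal_sub]
    push_cast
    ring_nf
  have hwim : w.im = r₁ * Real.sin (a₁ - c) + r₂ * Real.sin (a₂ - c) := by
    rw [hwe]
    simp only [Complex.exp_mul_I, Complex.add_re, Complex.add_im, Complex.mul_re,
      Complex.mul_im, Complex.ofReal_re, Complex.ofReal_im, Complex.I_re, Complex.I_im,
      Complex.ofReal_sub, Complex.cos_ofReal_re, Complex.cos_ofReal_im,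
      Complex.sin_ofReal_re, Complex.sin_ofReal_im, ← Complex.ofReal_sub]
    push_cast
    ring_nf
  have hcosd : 0 < Real.cos d := Real.cos_pos_of_mem_Ioo ⟨by linarith, hdlt⟩
  have hcos : ∀ δ : ℝ, |δ| ≤ d → Real.cos d ≤ Real.cos δ := by
    intro δ hδ'
    rw [← Real.cos_abs δ]
    exact Real.cos_le_cos_of_nonneg_of_le_pi (abs_nonneg δ) (by linarith) hδ'
  have hre1 : 0 < Real.cos (a₁ - c) := lt_of_lt_of_le hcosd (hcos _ hδ₁)
  have hre2 : 0 < Real.cos (a₂ - c) := lt_of_lt_of_le hcosd (hcos _ hδ₂)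
  have hrepos : 0 < w.re := by rw [hwre]; positivity
  have hsin : ∀ δ : ℝ, |δ| ≤ d → Real.cos d * |Real.sin δ| ≤ Real.sin d * Real.cos δ := by
    intro δ hδ'
    have h1 : |Real.sin δ| = Real.sin |δ| := by
      rcases abs_cases δ with ⟨e, h'⟩ | ⟨e, h'⟩
      · rw [e, abs_of_nonneg (Real.sin_nonneg_of_nonneg_of_le_pi h' (by linarith [abs_le.mp hδ']))]
      · have h2 : -δ ≤ π := by rw [← e]; linarith [abs_le.mp hδ']
        have h3 := Real.sin_nonneg_of_nonneg_of_le_pi (x := -δ) (by linarith) h2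
        rw [Real.sin_neg] at h3
        rw [e, Real.sin_neg, abs_of_nonpos (by linarith)]
    rw [h1, ← Real.cos_abs δ]
    have : 0 ≤ Real.sin (d - |δ|) :=
      Real.sin_nonneg_of_nonneg_of_le_pi (by linarith [abs_nonneg δ]) (by linarith [abs_nonneg δ])
    rw [Real.sin_sub] at this; linarith
  have himle : |w.im| * Real.cos d ≤ Real.sin d * w.re := by
    rw [hwim, hwre]
    have k₁ := hsin _ hδ₁
    have k₂ := hsin _ hδ₂
    have t₁ : |Real.sin (a₁ - c)| ≤ Real.sin d * Real.cos (a₁ - c) / Real.cos d := by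
      rw [le_div_iff₀ hcosd]; linarith
    calc |r₁ * Real.sin (a₁ - c) + r₂ * Real.sin (a₂ - c)| * Real.cos d
        ≤ (r₁ * |Real.sin (a₁ - c)| + r₂ * |Real.sin (a₂ - c)|) * Real.cos d := by
          apply mul_le_mul_of_nonneg_right _ hcosd.le
          calc |r₁ * Real.sin (a₁ - c) + r₂ * Real.sin (a₂ - c)|
              ≤ |r₁ * Real.sin (a₁ - c)| + |r₂ * Real.sin (a₂ - c)| := abs_add_le _ _
            _ = r₁ * |Real.sin (a₁ - c)| + r₂ * |Real.sin (a₂ - c)| := by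
                rw [abs_mul, abs_mul, abs_of_pos hr₁0, abs_of_pos hr₂0]
      _ ≤ Real.sin d * (r₁ * Real.cos (a₁ - c) + r₂ * Real.cos (a₂ - c)) := by nlinarith
  have hw0 : w ≠ 0 := fun h' => by rw [h'] at hrepos; simp at hrepos
  have hsum0 : z₁ + z₂ ≠ 0 := by
    intro h'
    rw [hw, h', zero_mul] at hrepos
    simp at hrepos
  refine ⟨hsum0, ?_⟩
  -- arg of w
  set θ := w.arg with hθ
  have hθlt : |θ| < π / 2 := Complex.abs_arg_lt_pi_div_two_iff.mpr (Or.inl hrepos)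
  have htan : Real.tan θ = w.im / w.re := Complex.tan_arg w
  have hθeq : θ = Real.arctan (w.im / w.re) := by
    rw [← htan, Real.arctan_tan (by linarith [abs_lt.mp hθlt]) (by linarith [abs_lt.mp hθlt])]
  have htand : |w.im / w.re| ≤ Real.tan d := by
    rw [Real.tan_eq_sin_div_cos, abs_div, abs_of_pos hrepos, div_le_div_iff₀ hrepos hcosd]
    linarith
  have hθd : |θ| ≤ d := by
    rw [hθeq]
    rcases abs_le.mp htand with ⟨l1, l2⟩
    have m1 : Real.arctan (w.im / w.re) ≤ Real.arctan (Real.tan d) :=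
      Real.arctan_strictMono.monotone l2
    have m2 : Real.arctan (-Real.tan d) ≤ Real.arctan (w.im / w.re) :=
      Real.arctan_strictMono.monotone l1
    rw [Real.arctan_tan (by linarith) hdlt] at m1
    rw [← Real.tan_neg, Real.arctan_tan (by linarith) (by linarith)] at m2
    exact abs_le.mpr ⟨m2, m1⟩
  -- arg of sum
  have hsum : z₁ + z₂ = (‖w‖ : ℂ) *
      (Complex.cos (↑(θ + c)) + Complex.sin (↑(θ + c)) * Complex.I) := by
    have hzw : z₁ + z₂ = w * Complex.exp ((c : ℂ) * Complex.I) := by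
      rw [hw, mul_assoc, ← Complex.exp_add,
        show -(c : ℂ) * Complex.I + (c : ℂ) * Complex.I = 0 by ring,
        Complex.exp_zero, mul_one]
    rw [hzw, ← Complex.exp_mul_I]
    conv_lhs => rw [← Complex.norm_mul_exp_arg_mul_I w]
    rw [mul_assoc, ← Complex.exp_add]
    congr 2
    push_cast
    ring
  have hθc : |θ + c| ≤ M := by
    rcases abs_le.mp hθd with ⟨l1, l2⟩
    exact abs_le.mpr ⟨by linarith, by linarith⟩
  have hargsum : (z₁ + z₂).arg = θ + c := by
    rw [hsum]
    exact Complex.arg_mul_cos_add_sin_mul_I (norm_pos_iff.mpr hw0)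
      ⟨by rcases abs_le.mp hθc with ⟨l, _⟩; linarith, by rcases abs_le.mp hθc with ⟨_, l⟩; linarith⟩
  rw [hargsum]
  exact hθc
end

section
/- Let ω′ ∈ (0, π), let z be a nonzero complex number with |arg z| < ω′, and let λ be a nonzero complex number with |arg λ| > ω′. Then |λ − z| ≥ |λ| · min( sin((ω′ − |arg z|)/2), cos(ω′/2) ), and the quantity min( sin((ω′ − |arg z|)/2), cos(ω′/2) ) is strictly positive. -/
theorem stmt_4 (ω' : ℝ) (hω' : ω' ∈ Set.Ioo 0 Real.pi)
    (z : ℂ) (hz : z ≠ 0) (hzarg : |z.arg| < ω')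
    (lam : ℂ) (hlam : lam ≠ 0) (hlamarg : ω' < |lam.arg|) :
    ‖lam‖ * min (Real.sin ((ω' - |z.arg|) / 2)) (Real.cos (ω' / 2)) ≤
      ‖lam - z‖ ∧
    0 < min (Real.sin ((ω' - |z.arg|) / 2)) (Real.cos (ω' / 2)) := by
  obtain ⟨hω0, hωπ⟩ := hω'
  have hpi := Real.pi_pos
  set a := |z.arg| with ha
  set b := |lam.arg| with hb
  have ha0 : 0 ≤ a := abs_nonneg _
  have hbπ : b ≤ Real.pi := Complex.abs_arg_le_pi lam
  -- ψ = min ((ω'-a)/2) ((π-ω')/2)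
  set ψ : ℝ := min ((ω' - a) / 2) ((Real.pi - ω') / 2) with hψ
  have hψ0 : 0 < ψ := lt_min (by linarith) (by linarith)
  have hψ4 : ψ ≤ Real.pi / 4 := by
    rcases le_total ω' (Real.pi / 2) with h | h
    · exact le_trans (min_le_left _ _) (by linarith)
    · exact le_trans (min_le_right _ _) (by linarith)
  -- the RHS min equals sin ψ
  have hsinmin : min (Real.sin ((ω' - a) / 2)) (Real.cos (ω' / 2)) = Real.sin ψ := by
    rw [show Real.cos (ω' / 2) = Real.sin ((Real.pi - ω') / 2) by
      rw [← Real.sin_pi_div_two_sub]; ring_nf]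
    rcases le_total ((ω' - a) / 2) ((Real.pi - ω') / 2) with h | h
    · rw [min_eq_left (Real.sin_le_sin_of_le_of_le_pi_div_two
        (by linarith) (by linarith) h), hψ, min_eq_left h]
    · rw [min_eq_right (Real.sin_le_sin_of_le_of_le_pi_div_two
        (by linarith) (by linarith) h), hψ, min_eq_right h]
  have hsinψpos : 0 < Real.sin ψ := Real.sin_pos_of_pos_of_lt_pi hψ0 (by linarith)
  refine ⟨?_, hsinmin ▸ hsinψpos⟩
  -- key cosine bound
  have habsd : |lam.arg - z.arg| ≥ b - a := by
    have := abs_sub_abs_le_abs_sub lam.arg z.arg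
    linarith [this]
  have habsd2 : |lam.arg - z.arg| ≤ b + a := by
    calc |lam.arg - z.arg| ≤ |lam.arg| + |z.arg| := abs_sub _ _
    _ = b + a := rfl
  have h2ψ : 0 ≤ 2 * ψ := by linarith
  have hcos : Real.cos (lam.arg - z.arg) ≤ Real.cos (2 * ψ) := by
    rw [← Real.cos_abs]
    rcases le_total (|lam.arg - z.arg|) Real.pi with h | h
    · apply Real.cos_le_cos_of_nonneg_of_le_pi h2ψ h
      have : 2 * ψ ≤ ω' - a := by
        have := min_le_left ((ω' - a) / 2) ((Real.pi - ω') / 2); linarith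
      linarith
    · rw [show |lam.arg - z.arg| = 2 * Real.pi - (2 * Real.pi - |lam.arg - z.arg|) by ring,
        Real.cos_two_pi_sub]
      apply Real.cos_le_cos_of_nonneg_of_le_pi h2ψ (by linarith)
      have : 2 * ψ ≤ Real.pi - ω' := by
        have := min_le_right ((ω' - a) / 2) ((Real.pi - ω') / 2); linarith
      linarith
  -- the square expansion
  have hre : (lam * (starRingEnd ℂ) z).re
      = ‖lam‖ * ‖z‖ * Real.cos (lam.arg - z.arg) := by
    rw [Real.cos_sub, Complex.mul_re, Complex.conj_re, Complex.conj_im,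
      ← Complex.norm_mul_cos_arg lam, ← Complex.norm_mul_sin_arg lam,
      ← Complex.norm_mul_cos_arg z, ← Complex.norm_mul_sin_arg z]
    ring
  have hsq : ‖lam - z‖ ^ 2
      = ‖lam‖ ^ 2 + ‖z‖ ^ 2
        - 2 * (‖lam‖ * ‖z‖ * Real.cos (lam.arg - z.arg)) := by
    rw [Complex.sq_norm, Complex.sq_norm, Complex.sq_norm, Complex.normSq_sub, hre]
  set r := ‖lam‖ with hr
  set s := ‖z‖ with hs
  have hr0 : 0 ≤ r := norm_nonneg _
  have hs0 : 0 ≤ s := norm_nonneg _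
  have hc1 : Real.cos (2 * ψ) ≤ 1 := Real.cos_le_one _
  have hsin2ψ : 0 ≤ Real.sin (2 * ψ) :=
    Real.sin_nonneg_of_nonneg_of_le_pi h2ψ (by linarith)
  have hpyth : Real.sin (2 * ψ) ^ 2 + Real.cos (2 * ψ) ^ 2 = 1 := Real.sin_sq_add_cos_sq _
  have hkey : (r * Real.sin (2 * ψ)) ^ 2 ≤ ‖lam - z‖ ^ 2 := by
    rw [hsq]
    nlinarith [sq_nonneg (s - r * Real.cos (2 * ψ)), mul_nonneg hr0 hs0,
      mul_le_mul_of_nonneg_left hcos (mul_nonneg hr0 hs0)]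
  have h1 : r * Real.sin (2 * ψ) ≤ ‖lam - z‖ := by
    have := Real.sqrt_le_sqrt hkey
    rwa [Real.sqrt_sq (mul_nonneg hr0 hsin2ψ),
      Real.sqrt_sq (norm_nonneg _)] at this
  have h2 : Real.sin ψ ≤ Real.sin (2 * ψ) :=
    Real.sin_le_sin_of_le_of_le_pi_div_two (by linarith) (by linarith) (by linarith)
  rw [hsinmin]
  calc r * Real.sin ψ ≤ r * Real.sin (2 * ψ) := by nlinarith
  _ ≤ ‖lam - z‖ := h1
end

section
/- Let ω_T ∈ (0, π), let z be a nonzero complex number with |arg z| < π − ω_T, let ω′ ∈ (max(ω_T, π − ω_T), π), and let λ be a nonzero complex number with |arg λ| > ω′. Then |λ − z| ≥ |λ| · min( sin((ω′ − (π − ω_T))/2), sin(π − ω_T/2) ), and the quantity min( sin((ω′ − (π − ω_T))/2), sin(π − ω_T/2) ), which does not depend on z and λ, is strictly positive. -/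
/-- On a subinterval `[u, v] ⊆ [0, 2π]`, the cosine is bounded by its values
at the endpoints. -/
lemma aux_cos_le_max (u v x : ℝ) (hu : 0 ≤ u) (hv : v ≤ 2 * Real.pi)
    (hux : u ≤ x) (hxv : x ≤ v) :
    Real.cos x ≤ max (Real.cos u) (Real.cos v) := by
  rcases le_or_gt x Real.pi with h | h
  · exact le_max_of_le_left (Real.cos_le_cos_of_nonneg_of_le_pi hu h hux)
  · have hx : Real.cos x = Real.cos (2 * Real.pi - x) := (Real.cos_two_pi_sub x).symm
    have hvv : Real.cos v = Real.cos (2 * Real.pi - v) := (Real.cos_two_pi_sub v).symm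
    rw [hx]
    refine le_max_of_le_right ?_
    rw [hvv]
    exact Real.cos_le_cos_of_nonneg_of_le_pi (by linarith) (by linarith) (by linarith)

lemma aux_keyalg (r t c m : ℝ) (hr : 0 ≤ r) (ht : 0 ≤ t) (hm0 : 0 ≤ m)
    (hm1 : m ≤ 1) (hc : c ≤ 1 - 2 * m ^ 2) :
    (r * m) ^ 2 ≤ r ^ 2 + t ^ 2 - 2 * (r * t) * c := by
  rcases le_or_gt c 0 with h0 | h0
  · nlinarith [mul_nonneg (mul_nonneg hr ht) (neg_nonneg.2 h0), sq_nonneg t,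
      mul_nonneg (sq_nonneg r) (by nlinarith : (0:ℝ) ≤ 1 - m ^ 2)]
  · have hc1 : c ≤ 1 := by nlinarith [sq_nonneg m]
    nlinarith [sq_nonneg (t - r * c),
      mul_nonneg (mul_nonneg hr hr)
        (mul_nonneg (by linarith : (0:ℝ) ≤ 1 - c) (by linarith : (0:ℝ) ≤ 1 + 2 * c))]

/-- `cos θ = 1 - 2 sin²(θ/2)`. -/
lemma aux_cos_half (θ : ℝ) : Real.cos θ = 1 - 2 * Real.sin (θ / 2) ^ 2 := by
  have h1 := Real.cos_two_mul (θ / 2)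
  have h2 := Real.sin_sq_add_cos_sq (θ / 2)
  have : (2 : ℝ) * (θ / 2) = θ := by ring
  rw [this] at h1
  linarith

theorem stmt_5 (ωT : ℝ) (hωT : ωT ∈ Set.Ioo 0 Real.pi)
    (z : ℂ) (hz : z ≠ 0) (hzarg : |z.arg| < Real.pi - ωT)
    (ω' : ℝ) (hω' : ω' ∈ Set.Ioo (max ωT (Real.pi - ωT)) Real.pi)
    (lam : ℂ) (hlam : lam ≠ 0) (hlamarg : ω' < |lam.arg|) :
    ‖lam‖ *
        min (Real.sin ((ω' - (Real.pi - ωT)) / 2)) (Real.sin (Real.pi - ωT / 2)) ≤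
      ‖lam - z‖ ∧
    0 < min (Real.sin ((ω' - (Real.pi - ωT)) / 2)) (Real.sin (Real.pi - ωT / 2)) := by
  obtain ⟨hωT0, hωTπ⟩ := hωT
  obtain ⟨hω'l, hω'u⟩ := hω'
  have hω'1 : ωT < ω' := lt_of_le_of_lt (le_max_left _ _) hω'l
  have hω'2 : Real.pi - ωT < ω' := lt_of_le_of_lt (le_max_right _ _) hω'l
  set d₁ : ℝ := ω' - (Real.pi - ωT) with hd₁def
  have hd₁pos : 0 < d₁ := by simp only [hd₁def]; linarith
  have hd₁lt : d₁ < ωT := by simp only [hd₁def]; linarith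
  have hpi := Real.pi_pos
  -- positivity of the constant
  have hs1 : 0 < Real.sin (d₁ / 2) :=
    Real.sin_pos_of_pos_of_lt_pi (by linarith) (by linarith)
  have hs2 : 0 < Real.sin (Real.pi - ωT / 2) :=
    Real.sin_pos_of_pos_of_lt_pi (by linarith) (by linarith)
  set m : ℝ := min (Real.sin (d₁ / 2)) (Real.sin (Real.pi - ωT / 2)) with hmdef
  have hmpos : 0 < m := lt_min hs1 hs2
  refine ⟨?_, hmpos⟩
  have hm1 : m ≤ 1 := le_trans (min_le_left _ _) (Real.sin_le_one _)
  -- notation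
  set a : ℝ := lam.arg with hadef
  set b : ℝ := z.arg with hbdef
  set r : ℝ := ‖lam‖ with hrdef
  set t : ℝ := ‖z‖ with htdef
  have hr0 : 0 < r := by
    simpa [hrdef] using (norm_pos_iff.mpr hlam)
  have ht0 : 0 < t := by
    simpa [htdef] using (norm_pos_iff.mpr hz)
  have hapi : |a| ≤ Real.pi := Complex.abs_arg_le_pi lam
  have hb1 : -(Real.pi - ωT) < b := (abs_lt.mp hzarg).1
  have hb2 : b < Real.pi - ωT := (abs_lt.mp hzarg).2
  -- cos (a - b) ≤ max (cos d₁) (cos ωT)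
  have hcosbound : Real.cos (a - b) ≤ max (Real.cos d₁) (Real.cos ωT) := by
    have hωTcos : Real.cos (2 * Real.pi - ωT) = Real.cos ωT := Real.cos_two_pi_sub ωT
    rcases lt_or_ge 0 a with ha | ha
    · -- a > 0, so ω' < a ≤ π
      have ha1 : ω' < a := by rwa [abs_of_pos ha] at hlamarg
      have ha2 : a ≤ Real.pi := by rwa [abs_of_pos ha] at hapi
      have := aux_cos_le_max d₁ (2 * Real.pi - ωT) (a - b) (le_of_lt hd₁pos)
        (by linarith) (by simp only [hd₁def]; linarith) (by linarith)
      rwa [hωTcos] at this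
    · -- a ≤ 0; in fact a < 0 since |a| > ω' > 0
      have haneg : a < 0 := by
        rcases lt_or_eq_of_le ha with h | h
        · exact h
        · exfalso
          have : ω' < 0 := by simpa [h] using hlamarg
          linarith
      have ha1 : ω' < -a := by rwa [abs_of_neg haneg] at hlamarg
      have ha2 : -a ≤ Real.pi := by rwa [abs_of_neg haneg] at hapi
      have hsym : Real.cos (a - b) = Real.cos (b - a) := by
        rw [← Real.cos_neg]; ring_nf
      rw [hsym]
      have := aux_cos_le_max d₁ (2 * Real.pi - ωT) (b - a) (le_of_lt hd₁pos)
        (by linarith) (by simp only [hd₁def]; linarith) (by linarith)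
      rwa [hωTcos] at this
  -- m ≤ sin of half the relevant angle, and cos bound in terms of m
  have hcm : Real.cos (a - b) ≤ 1 - 2 * m ^ 2 := by
    rcases max_cases (Real.cos d₁) (Real.cos ωT) with ⟨hm', _⟩ | ⟨hm', _⟩ <;>
      rw [hm'] at hcosbound
    · have hmle : m ≤ Real.sin (d₁ / 2) := min_le_left _ _
      have := aux_cos_half d₁
      nlinarith [hmpos.le, hs1.le]
    · have hmle : m ≤ Real.sin (ωT / 2) := by
        exact le_trans (min_le_right _ _) (le_of_eq (Real.sin_pi_sub _))
      have := aux_cos_half ωT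
      have hsin0 : 0 < Real.sin (ωT / 2) :=
        Real.sin_pos_of_pos_of_lt_pi (by linarith) (by linarith)
      nlinarith [hmpos.le]
  -- the squared identity
  have hcos_eq : Real.cos (a - b) * (r * t) = lam.re * z.re + lam.im * z.im := by
    rw [Real.cos_sub, Complex.cos_arg hlam, Complex.cos_arg hz,
      Complex.sin_arg, Complex.sin_arg]
    field_simp
    rw [hrdef, htdef]; ring
  have hr2 : r ^ 2 = lam.re ^ 2 + lam.im ^ 2 := by
    rw [hrdef, Complex.sq_norm, Complex.normSq_apply]; ring
  have ht2 : t ^ 2 = z.re ^ 2 + z.im ^ 2 := by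
    rw [htdef, Complex.sq_norm, Complex.normSq_apply]; ring
  have e1 : ‖lam - z‖ ^ 2 = (lam.re - z.re) ^ 2 + (lam.im - z.im) ^ 2 := by
    rw [Complex.sq_norm, Complex.normSq_apply, Complex.sub_re, Complex.sub_im]
    ring
  have H1 : ‖lam - z‖ ^ 2 = r ^ 2 + t ^ 2 - 2 * (r * t) * Real.cos (a - b) := by
    rw [e1, hr2, ht2]
    linear_combination (2 : ℝ) * hcos_eq
  have Hsq : (r * m) ^ 2 ≤ ‖lam - z‖ ^ 2 := by
    rw [H1]
    exact aux_keyalg r t (Real.cos (a - b)) m hr0.le ht0.le hmpos.le hm1 hcm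
  have habs : (0:ℝ) ≤ ‖lam - z‖ := norm_nonneg _
  have hrm : 0 ≤ r * m := mul_nonneg hr0.le hmpos.le
  have hfin := Real.sqrt_le_sqrt Hsq
  rwa [Real.sqrt_sq hrm, Real.sqrt_sq habs] at hfin
end

section
/- Let X be a complex Banach space, T a bounded linear operator on X, ω_T ∈ [0, π), M > 0, z a nonzero complex number with |arg z| + ω_T < π, and ω′ ∈ (max(ω_T, |arg z|), π). Assume that every nonzero complex number μ with |arg μ| > ω_T lies in the resolvent set of T and satisfies ‖(T − μI)⁻¹‖ ≤ M/|μ|. Then: (i) the spectrum of T + zI is contained in the closed sector S̄_{max(ω_T, |arg z|)}; and (ii) for every nonzero complex number λ with |arg λ| > ω′, λ lies in the resolvent set of T + zI and ‖(T + zI − λI)⁻¹‖ ≤ C/|λ|, where C = M / min( sin((ω′ − |arg z|)/2), cos(ω′/2) ). -/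
open Complex Real

lemma re_ofReal_mul_exp (r x : ℝ) : ((r:ℂ) * Complex.exp (x * I)).re = r * Real.cos x := by
  simp [Complex.exp_mul_I, ← Complex.ofReal_cos, ← Complex.ofReal_sin]

lemma im_ofReal_mul_exp (r x : ℝ) : ((r:ℂ) * Complex.exp (x * I)).im = r * Real.sin x := by
  simp [Complex.exp_mul_I, ← Complex.ofReal_cos, ← Complex.ofReal_sin]

lemma re_ofReal_mul_exp_neg (r x : ℝ) : ((r:ℂ) * Complex.exp (-(x:ℂ) * I)).re = r * Real.cos x := by
  have : (-(x:ℂ)) * I = ((-x : ℝ) : ℂ) * I := by push_cast; ring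
  rw [this, re_ofReal_mul_exp, Real.cos_neg]

lemma abs_arg_le_of_re {s : ℂ} (hs : s ≠ 0) {m : ℝ} (hm : 0 ≤ m)
    (h : (‖s‖) * Real.cos m ≤ s.re) : |s.arg| ≤ m := by
  by_contra hlt
  push_neg at hlt
  have h1 : Real.cos |s.arg| < Real.cos m :=
    Real.cos_lt_cos_of_nonneg_of_le_pi hm (Complex.abs_arg_le_pi s) hlt
  have h2 : Real.cos |s.arg| = Real.cos s.arg := by
    rcases abs_cases s.arg with ⟨h, _⟩ | ⟨h, _⟩ <;> rw [h] <;> simp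
  have h3 : Real.cos s.arg = s.re / ‖s‖ := Complex.cos_arg hs
  have habs : 0 < ‖s‖ := norm_pos_iff.mpr hs
  rw [h2, h3, div_lt_iff₀ habs] at h1
  nlinarith

lemma arg_add_aux {a b : ℂ} (ha : a ≠ 0) (hb : b ≠ 0) (hab : a.arg ≤ b.arg)
    (h : b.arg - a.arg < π) :
    a + b ≠ 0 ∧ a.arg ≤ (a+b).arg ∧ (a+b).arg ≤ b.arg := by
  set α := a.arg with hα
  set β := b.arg with hβ
  set γ := (α + β) / 2 with hγ
  set η := (β - α) / 2 with hη
  have hη0 : 0 ≤ η := by simp only [hη]; linarith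
  have hη2 : η < π / 2 := by simp only [hη]; linarith
  have hcosη : 0 < Real.cos η := Real.cos_pos_of_mem_Ioo ⟨by linarith [Real.pi_pos], hη2⟩
  set w : ℂ := Complex.exp (-γ * I) * (a + b) with hw
  have hae : a = (‖a‖ : ℂ) * Complex.exp (α * I) :=
    (Complex.norm_mul_exp_arg_mul_I a).symm
  have hbe : b = (‖b‖ : ℂ) * Complex.exp (β * I) :=
    (Complex.norm_mul_exp_arg_mul_I b).symm
  have hwe : w = (‖a‖ : ℂ) * Complex.exp (-(η:ℂ) * I)
      + (‖b‖ : ℂ) * Complex.exp ((η:ℂ) * I) := by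
    rw [hw, mul_add]
    nth_rewrite 1 [hae]; nth_rewrite 1 [hbe]
    rw [mul_left_comm, mul_left_comm (Complex.exp _), ← Complex.exp_add, ← Complex.exp_add]
    congr 2
    · push_cast [hγ, hη]; ring
    · push_cast [hγ, hη]; ring
  have hwre : w.re = (‖a‖ + ‖b‖) * Real.cos η := by
    rw [hwe, Complex.add_re, re_ofReal_mul_exp_neg]
    have : ((η:ℝ):ℂ) * I = (η:ℂ) * I := by norm_cast
    rw [← this, re_ofReal_mul_exp]
    ring
  have hwre0 : 0 < w.re := by
    rw [hwre]
    exact mul_pos (add_pos_of_pos_of_nonneg (norm_pos_iff.mpr ha) (norm_nonneg b)) hcosη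
  have hw0 : w ≠ 0 := fun h0 => by simp [h0] at hwre0
  have hab0 : a + b ≠ 0 := by
    intro h0; rw [h0, mul_zero] at hw; exact hw0 hw
  have hwabs : ‖w‖ ≤ ‖a‖ + ‖b‖ := by
    rw [hwe]
    refine (norm_add_le _ _).trans ?_
    simp [Complex.norm_exp]
  have hargw : |w.arg| ≤ η := by
    refine abs_arg_le_of_re hw0 hη0 ?_
    rw [hwre]
    exact mul_le_mul_of_nonneg_right hwabs hcosη.le
  have habe : a + b = (‖w‖ : ℂ) *
      (Complex.cos ((γ + w.arg : ℝ) : ℂ) + Complex.sin ((γ + w.arg : ℝ) : ℂ) * I) := by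
    have h1 : a + b = Complex.exp (γ * I) * w := by
      rw [hw, ← mul_assoc, ← Complex.exp_add]
      have : (γ:ℂ) * I + -(γ:ℂ) * I = 0 := by ring
      rw [this, Complex.exp_zero, one_mul]
    rw [h1]
    nth_rewrite 1 [← Complex.norm_mul_exp_arg_mul_I w]
    rw [mul_left_comm, ← Complex.exp_add]
    have : (γ:ℂ) * I + (w.arg : ℂ) * I = ((γ + w.arg : ℝ) : ℂ) * I := by push_cast; ring
    rw [this, Complex.exp_mul_I]
  have hmem : γ + w.arg ∈ Set.Ioc (-π) π := by
    have h1 : -η ≤ w.arg := (abs_le.mp hargw).1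
    have h2 : w.arg ≤ η := (abs_le.mp hargw).2
    have hαπ : -π < α := Complex.neg_pi_lt_arg a
    have hβπ : β ≤ π := Complex.arg_le_pi b
    constructor
    · simp only [hγ, hη] at *; linarith
    · simp only [hγ, hη] at *; linarith
  have harg : (a + b).arg = γ + w.arg := by
    rw [habe]
    exact Complex.arg_mul_cos_add_sin_mul_I (norm_pos_iff.mpr hw0) hmem
  have h1 : -η ≤ w.arg := (abs_le.mp hargw).1
  have h2 : w.arg ≤ η := (abs_le.mp hargw).2
  refine ⟨hab0, ?_, ?_⟩
  · rw [harg]; simp only [hγ, hη] at *; linarith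
  · rw [harg]; simp only [hγ, hη] at *; linarith

lemma sector_add {a b : ℂ} (ha : a ≠ 0) (hb : b ≠ 0) (h : |a.arg| + |b.arg| < π) :
    a + b ≠ 0 ∧ |(a+b).arg| ≤ max |a.arg| |b.arg| := by
  rcases le_total a.arg b.arg with hab | hab
  · have hd : b.arg - a.arg < π := by
      rcases abs_cases a.arg with ⟨e1, _⟩ | ⟨e1, _⟩ <;> rcases abs_cases b.arg with ⟨e2, _⟩ | ⟨e2, _⟩ <;>
        linarith
    obtain ⟨h0, hl, hr⟩ := arg_add_aux ha hb hab hd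
    refine ⟨h0, abs_le.mpr ⟨?_, ?_⟩⟩
    · have : -|a.arg| ≤ a.arg := neg_abs_le _
      have := le_max_left |a.arg| |b.arg|
      linarith
    · have : b.arg ≤ |b.arg| := le_abs_self _
      have := le_max_right |a.arg| |b.arg|
      linarith
  · have hd : a.arg - b.arg < π := by
      rcases abs_cases a.arg with ⟨e1, _⟩ | ⟨e1, _⟩ <;> rcases abs_cases b.arg with ⟨e2, _⟩ | ⟨e2, _⟩ <;>
        linarith
    obtain ⟨h0, hl, hr⟩ := arg_add_aux hb ha hab hd
    rw [add_comm] at h0 hl hr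
    refine ⟨h0, abs_le.mpr ⟨?_, ?_⟩⟩
    · have : -|b.arg| ≤ b.arg := neg_abs_le _
      have := le_max_right |a.arg| |b.arg|
      linarith
    · have : a.arg ≤ |a.arg| := le_abs_self _
      have := le_max_left |a.arg| |b.arg|
      linarith

lemma norm_sub_lower {z lam : ℂ} (hz : z ≠ 0) (hlam : lam ≠ 0) {ω' : ℝ}
    (h1 : |z.arg| < ω') (h2 : ω' < |lam.arg|) (h3 : ω' < π) :
    ‖lam‖ * min (Real.sin ((ω' - |z.arg|) / 2)) (Real.cos (ω' / 2)) ≤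
      ‖lam - z‖ := by
  have hZ0 : 0 ≤ |z.arg| := abs_nonneg _
  set β := (ω' - |z.arg|) / 2 with hβ
  set m := min (Real.sin β) (Real.cos (ω' / 2)) with hm
  have hβ0 : 0 < β := by simp only [hβ]; linarith
  have hβ2 : β < π / 2 := by simp only [hβ]; linarith
  have hm1 : m ≤ 1 := le_trans (min_le_right _ _) (Real.cos_le_one _)
  have hlz0 : 0 ≤ ‖lam‖ := norm_nonneg _
  rcases le_or_gt (lam * (starRingEnd ℂ) z).re 0 with hre | hre
  · have hsq : (‖lam‖)^2 ≤ (‖lam - z‖)^2 := by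
      rw [Complex.sq_norm, Complex.sq_norm, Complex.normSq_sub]
      have := Complex.normSq_nonneg z
      linarith
    have hle : ‖lam‖ ≤ ‖lam - z‖ := by
      nlinarith [norm_nonneg (lam - z)]
    have : ‖lam‖ * m ≤ ‖lam‖ * 1 :=
      mul_le_mul_of_nonneg_left hm1 hlz0
    rw [mul_one] at this
    linarith
  · set d := lam.arg - z.arg with hd
    have habs_pos : 0 < ‖lam‖ := norm_pos_iff.mpr hlam
    have habsz_pos : 0 < ‖z‖ := norm_pos_iff.mpr hz
    have hprod : lam * (starRingEnd ℂ) z =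
        ((‖lam‖ * ‖z‖ : ℝ) : ℂ) * Complex.exp ((d : ℝ) * I) := by
      nth_rewrite 1 [← Complex.norm_mul_exp_arg_mul_I lam, ← Complex.norm_mul_exp_arg_mul_I z]
      rw [map_mul, ← Complex.exp_conj, map_mul, Complex.conj_I, Complex.conj_ofReal,
        Complex.conj_ofReal]
      rw [show ((d:ℝ):ℂ) * I = (lam.arg : ℂ) * I + (z.arg : ℂ) * -I by push_cast [hd]; ring,
        Complex.exp_add]
      push_cast
      ring
    have hre' : (lam * (starRingEnd ℂ) z).re = ‖lam‖ * ‖z‖ * Real.cos d := by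
      rw [hprod, re_ofReal_mul_exp]
    have hcosd : 0 < Real.cos d := by
      rw [hre'] at hre
      by_contra hc
      push_neg at hc
      have := mul_nonpos_of_nonneg_of_nonpos (mul_pos habs_pos habsz_pos).le hc
      linarith
    have him : |(lam * (starRingEnd ℂ) z).im| = ‖lam‖ * ‖z‖ * |Real.sin d| := by
      rw [hprod, im_ofReal_mul_exp, abs_mul, _root_.abs_of_pos (mul_pos habs_pos habsz_pos)]
    have hkey : ‖lam‖ * ‖z‖ * |Real.sin d| ≤
        ‖lam - z‖ * ‖z‖ := by
      have e3 : ‖lam - z‖ * ‖z‖ =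
          ‖(lam - z) * (starRingEnd ℂ) z‖ := by
        rw [norm_mul, Complex.norm_conj]
      have e4 : (lam - z) * (starRingEnd ℂ) z =
          lam * (starRingEnd ℂ) z - ((Complex.normSq z : ℝ) : ℂ) := by
        rw [sub_mul, Complex.mul_conj]
      rw [e3, ← him]
      calc |(lam * (starRingEnd ℂ) z).im| = |((lam - z) * (starRingEnd ℂ) z).im| := by
            rw [e4, Complex.sub_im, Complex.ofReal_im, sub_zero]
        _ ≤ ‖(lam - z) * (starRingEnd ℂ) z‖ := Complex.abs_im_le_norm _
    have hsind : Real.sin β < |Real.sin d| := by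
      have hAπ : |lam.arg| ≤ π := Complex.abs_arg_le_pi lam
      have hZπ : |z.arg| ≤ π := Complex.abs_arg_le_pi z
      have hdle : |d| ≤ |lam.arg| + |z.arg| := abs_sub lam.arg z.arg
      have hdge : |lam.arg| - |z.arg| ≤ |d| := abs_sub_abs_le_abs_sub lam.arg z.arg
      have habsd0 : 0 ≤ |d| := abs_nonneg d
      rcases le_or_gt |d| π with hcase | hcase
      · have hsin_eq : |Real.sin d| = Real.sin (|d|) := by
          rcases abs_cases d with ⟨e, h0⟩ | ⟨e, h0⟩
          · rw [e, _root_.abs_of_nonneg (Real.sin_nonneg_of_nonneg_of_le_pi h0 (e ▸ hcase))]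
          · rw [e, Real.sin_neg, _root_.abs_of_nonpos
              (Real.sin_nonpos_of_nonpos_of_neg_pi_le h0.le (by rw [e] at hcase; linarith))]
        have hcos_eq : Real.cos (|d|) = Real.cos d := Real.cos_abs d
        have hdlt : |d| < π / 2 := by
          by_contra hc
          push_neg at hc
          have := Real.cos_nonpos_of_pi_div_two_le_of_le hc (by linarith)
          rw [hcos_eq] at this
          linarith
        have h2β : 2 * β < |d| := by
          simp only [hβ]
          rcases abs_cases lam.arg with ⟨e, _⟩ | ⟨e, _⟩ <;> linarith
        rw [hsin_eq]
        exact Real.strictMonoOn_sin ⟨by linarith, hβ2.le⟩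
          ⟨by linarith, hdlt.le⟩ (by linarith)
      · set δ := 2 * π - |d| with hδ
        have hδ0 : 0 ≤ δ := by simp only [hδ]; linarith
        have hsin_eq : |Real.sin d| = Real.sin δ := by
          have e1 : Real.sin δ = -Real.sin (|d|) := by rw [hδ, Real.sin_two_pi_sub]
          have e2 : |Real.sin d| = |Real.sin (|d|)| := by
            rcases abs_cases d with ⟨e, _⟩ | ⟨e, _⟩
            · rw [e]
            · rw [e, Real.sin_neg, abs_neg]
          rw [e2, ← abs_neg, ← e1, _root_.abs_of_nonneg]
          apply Real.sin_nonneg_of_nonneg_of_le_pi hδ0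
          simp only [hδ]; linarith
        have hcos_eq : Real.cos δ = Real.cos d := by
          rw [hδ, Real.cos_two_pi_sub, Real.cos_abs]
        have hdlt : δ < π / 2 := by
          by_contra hc
          push_neg at hc
          have hδπ : δ ≤ π + π / 2 := by simp only [hδ]; linarith [Real.pi_pos]
          have := Real.cos_nonpos_of_pi_div_two_le_of_le hc hδπ
          rw [hcos_eq] at this
          linarith
        have h2β : 2 * β < δ := by
          simp only [hβ, hδ]
          rcases abs_cases lam.arg with ⟨e, _⟩ | ⟨e, _⟩ <;> linarith
        rw [hsin_eq]
        exact Real.strictMonoOn_sin ⟨by linarith, hβ2.le⟩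
          ⟨by linarith, hdlt.le⟩ (by linarith)
    have hmβ : m ≤ Real.sin β := min_le_left _ _
    have h5 : ‖lam‖ * m ≤ ‖lam‖ * |Real.sin d| :=
      mul_le_mul_of_nonneg_left (hmβ.trans hsind.le) hlz0
    have h6 : (‖lam‖ * |Real.sin d|) * ‖z‖ ≤
        ‖lam - z‖ * ‖z‖ := by linarith [hkey]
    have hfin : ‖lam‖ * |Real.sin d| ≤ ‖lam - z‖ :=
      le_of_mul_le_mul_right h6 habsz_pos
    linarith

lemma not_in_sector {z lam : ℂ} (hz : z ≠ 0) {ωT s : ℝ}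
    (hzarg : |z.arg| + ωT < π) (hs : max ωT |z.arg| ≤ s)
    (hlam : lam ≠ 0) (hlamarg : s < |lam.arg|) :
    lam - z ≠ 0 ∧ ωT < |(lam - z).arg| := by
  have hne : lam - z ≠ 0 := by
    intro h0
    have he : lam = z := sub_eq_zero.mp h0
    rw [he] at hlamarg
    have h1 := le_max_right ωT |z.arg|
    linarith
  refine ⟨hne, ?_⟩
  by_contra hc
  push_neg at hc
  have hsum := sector_add hne hz (by linarith : |(lam - z).arg| + |z.arg| < π)
  rw [sub_add_cancel] at hsum
  have h2 : |lam.arg| ≤ max ωT |z.arg| := hsum.2.trans (max_le_max hc (le_refl _))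
  linarith

theorem stmt_6 (X : Type*) [NormedAddCommGroup X] [NormedSpace ℂ X] [CompleteSpace X]
    (T : X →L[ℂ] X) (ωT : ℝ) (hωT : ωT ∈ Set.Ico 0 Real.pi) (M : ℝ) (hM : 0 < M)
    (z : ℂ) (hz : z ≠ 0) (hzarg : |z.arg| + ωT < Real.pi)
    (ω' : ℝ) (hω' : ω' ∈ Set.Ioo (max ωT |z.arg|) Real.pi)
    (hres : ∀ μ : ℂ, μ ≠ 0 → ωT < |μ.arg| →
      IsUnit (T - μ • (1 : X →L[ℂ] X)) ∧
        ‖Ring.inverse (T - μ • (1 : X →L[ℂ] X))‖ ≤ M / ‖μ‖) :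
    spectrum ℂ (T + z • (1 : X →L[ℂ] X)) ⊆
        {ζ : ℂ | ζ = 0 ∨ |ζ.arg| ≤ max ωT |z.arg|} ∧
    ∀ lam : ℂ, lam ≠ 0 → ω' < |lam.arg| →
      IsUnit (T + z • (1 : X →L[ℂ] X) - lam • (1 : X →L[ℂ] X)) ∧
        ‖Ring.inverse (T + z • (1 : X →L[ℂ] X) - lam • (1 : X →L[ℂ] X))‖ ≤
          (M / min (Real.sin ((ω' - |z.arg|) / 2)) (Real.cos (ω' / 2))) / ‖lam‖ := by
  have hzZ : |z.arg| ≤ max ωT |z.arg| := le_max_right _ _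
  constructor
  · intro ζ hζ
    by_contra hcon
    simp only [Set.mem_setOf_eq, not_or, not_le] at hcon
    obtain ⟨hζ0, hζarg⟩ := hcon
    obtain ⟨hne, harg⟩ := not_in_sector hz hzarg (le_refl _) hζ0 hζarg
    obtain ⟨hu, -⟩ := hres (ζ - z) hne harg
    have heq : (algebraMap ℂ (X →L[ℂ] X)) ζ - (T + z • (1 : X →L[ℂ] X)) =
        -(T - (ζ - z) • (1 : X →L[ℂ] X)) := by
      rw [Algebra.algebraMap_eq_smul_one, sub_smul]
      abel
    exact (spectrum.mem_iff.mp hζ) (heq ▸ hu.neg)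
  · intro lam hlam0 hlamarg
    obtain ⟨hmax, hω'π⟩ := hω'
    obtain ⟨hne, harg⟩ := not_in_sector hz hzarg hmax.le hlam0 hlamarg
    obtain ⟨hu, hbound⟩ := hres (lam - z) hne harg
    have hop : T + z • (1 : X →L[ℂ] X) - lam • (1 : X →L[ℂ] X) =
        T - (lam - z) • (1 : X →L[ℂ] X) := by
      rw [sub_smul]
      abel
    rw [hop]
    refine ⟨hu, hbound.trans ?_⟩
    have hZω : |z.arg| < ω' := lt_of_le_of_lt hzZ hmax
    have hgeo := norm_sub_lower hz hlam0 hZω hlamarg hω'π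
    set m := min (Real.sin ((ω' - |z.arg|) / 2)) (Real.cos (ω' / 2)) with hm
    have hm0 : 0 < m := by
      apply lt_min
      · apply Real.sin_pos_of_pos_of_lt_pi
        · linarith
        · have := abs_nonneg z.arg
          linarith [Real.pi_pos]
      · apply Real.cos_pos_of_mem_Ioo
        constructor
        · linarith [Real.pi_pos, le_trans (le_max_left ωT |z.arg|) hmax.le, hωT.1]
        · linarith
    have hlampos : 0 < ‖lam‖ := norm_pos_iff.mpr hlam0
    have hlz0 : 0 < ‖lam - z‖ := norm_pos_iff.mpr hne
    rw [div_div]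
    exact div_le_div_of_nonneg_left hM.le (mul_pos hm0 hlampos) (by linarith [hgeo])
end

section
/- Let X be a complex Banach space, T a bounded linear operator on X, ω_T ∈ (0, π), and M > 0. Assume that every nonzero complex number μ with |arg μ| > ω_T lies in the resolvent set of T and satisfies ‖(T − μI)⁻¹‖ ≤ M/|μ|. Then for every nonzero complex number z with |arg z| + ω_T < π: (i) the spectrum of T + zI is contained in the closed sector S̄_{max(ω_T, π − ω_T)}; and (ii) for every ω′ ∈ (max(ω_T, π − ω_T), π) and every nonzero complex number λ with |arg λ| > ω′, λ lies in the resolvent set of T + zI and ‖(T + zI − λI)⁻¹‖ ≤ C/|λ|, where C = M / min( sin((ω′ − (π − ω_T))/2), sin(π − ω_T/2) ) does not depend on z and λ. -/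
lemma arg_lt_iff (w : ℂ) (hw : w ≠ 0) (m : ℝ) (hm0 : 0 ≤ m) (hmπ : m ≤ Real.pi) :
    w.re < ‖w‖ * Real.cos m ↔ m < |w.arg| := by
  have habs : 0 < ‖w‖ := norm_pos_iff.mpr hw
  have hre : w.re = ‖w‖ * Real.cos w.arg := by
    rw [Complex.cos_arg hw]; field_simp
  rw [hre, mul_lt_mul_iff_right₀ habs, ← Real.cos_abs w.arg]
  constructor
  · intro h
    by_contra hle
    push_neg at hle
    exact absurd (Real.cos_le_cos_of_nonneg_of_le_pi (abs_nonneg _) hmπ hle) (not_le.2 h)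
  · intro h
    exact Real.cos_lt_cos_of_nonneg_of_le_pi hm0 (Complex.abs_arg_le_pi w) h

lemma key_arg (ωT ω' : ℝ) (h1 : 0 < ωT) (h2 : ωT < Real.pi)
    (h3 : max ωT (Real.pi - ωT) < ω') (h4 : ω' < Real.pi)
    (z lam : ℂ) (hz : z ≠ 0) (hzarg : |z.arg| + ωT < Real.pi)
    (hlam : lam ≠ 0) (hlarg : ω' < |lam.arg|) :
    (lam - z).re < ‖lam - z‖ * Real.cos ωT := by
  have hω'0 : 0 < ω' := by have := le_max_left ωT (Real.pi - ωT); linarith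
  have hβ0 : 0 ≤ Real.pi - ωT := by linarith
  have hβπ : Real.pi - ωT ≤ Real.pi := by linarith
  have hlre : lam.re < ‖lam‖ * Real.cos ω' :=
    (arg_lt_iff lam hlam ω' hω'0.le h4.le).mpr hlarg
  have hzre : ‖z‖ * Real.cos (Real.pi - ωT) ≤ z.re := by
    by_contra hc
    push_neg at hc
    have := (arg_lt_iff z hz (Real.pi - ωT) hβ0 hβπ).mp hc
    linarith
  by_contra h
  push_neg at h
  set p := ‖lam - z‖ with hp
  set q := ‖z‖ with hq
  set r := ‖lam‖ with hr
  have hcβ : Real.cos (Real.pi - ωT) = -Real.cos ωT := Real.cos_pi_sub ωT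
  have hc1 : Real.cos ω' ≤ Real.cos ωT :=
    Real.cos_le_cos_of_nonneg_of_le_pi h1.le h4.le (le_trans (le_max_left _ _) h3.le)
  have hc2 : Real.cos ω' ≤ -Real.cos ωT := by
    rw [← hcβ]
    exact Real.cos_le_cos_of_nonneg_of_le_pi hβ0 h4.le (le_trans (le_max_right _ _) h3.le)
  have hc0 : Real.cos ω' ≤ 0 := by
    apply Real.cos_nonpos_of_pi_div_two_le_of_le
    · have : Real.pi / 2 ≤ max ωT (Real.pi - ωT) := by
        rcases le_total ωT (Real.pi / 2) with hh | hh
        · exact le_trans (by linarith) (le_max_right _ _)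
        · exact le_trans hh (le_max_left _ _)
      linarith
    · linarith [Real.pi_pos]
  have hsum : lam.re = (lam - z).re + z.re := by simp
  have htri1 : p - q ≤ r := by
    have : p ≤ r + q := by
      simpa [hp, hq, hr] using norm_sub_le lam z
    linarith
  have htri2 : q - p ≤ r := by
    have : q ≤ r + p := by
      have : ‖z‖ ≤ ‖lam‖ + ‖lam - z‖ := by
        calc ‖z‖ = ‖lam - (lam - z)‖ := by ring_nf
        _ ≤ ‖lam‖ + ‖lam - z‖ := by
            simpa using norm_sub_le lam (lam - z)
      simpa [hp, hq, hr] using this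
    linarith
  have hr0 : 0 < r := norm_pos_iff.mpr hlam
  -- main inequality
  have goal2 : r * Real.cos ω' ≤ (p - q) * Real.cos ωT := by
    rcases le_total q p with hd | hd
    · calc r * Real.cos ω' ≤ (p - q) * Real.cos ω' :=
            mul_le_mul_of_nonpos_right htri1 hc0
      _ ≤ (p - q) * Real.cos ωT := mul_le_mul_of_nonneg_left hc1 (by linarith)
    · calc r * Real.cos ω' ≤ (q - p) * Real.cos ω' :=
            mul_le_mul_of_nonpos_right htri2 hc0
      _ ≤ (q - p) * (-Real.cos ωT) := mul_le_mul_of_nonneg_left hc2 (by linarith)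
      _ = (p - q) * Real.cos ωT := by ring
  have hmain : r * Real.cos ω' ≤ p * Real.cos ωT - q * Real.cos ωT := by
    linarith [goal2, (by ring : (p - q) * Real.cos ωT = p * Real.cos ωT - q * Real.cos ωT)]
  have hzre' : -(q * Real.cos ωT) ≤ z.re := by
    rw [hcβ] at hzre; linarith
  linarith [h, hzre', hlre, hsum, hmain]



lemma trig_bound (ωT ω' a : ℝ) (h1 : 0 < ωT) (h2 : ωT < Real.pi)
    (h3 : max ωT (Real.pi - ωT) < ω') (h4 : ω' < Real.pi)
    (ha1 : ω' - (Real.pi - ωT) < a) (ha2 : a < Real.pi + (Real.pi - ωT)) :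
    Real.cos a ≤ 0 ∨
      min (Real.sin ((ω' - (Real.pi - ωT)) / 2)) (Real.sin (ωT / 2)) ≤ |Real.sin a| := by
  have hπ := Real.pi_pos
  set g := ω' - (Real.pi - ωT) with hg
  have hg0 : 0 < g := by
    have := le_max_right ωT (Real.pi - ωT); simp only [hg]; linarith
  have hgπ : g < Real.pi := by simp only [hg]; linarith
  rcases le_or_gt a (Real.pi / 2) with h | h
  · right
    have hs : Real.sin (g / 2) ≤ Real.sin a := by
      apply (Real.strictMonoOn_sin ⟨by linarith, by linarith⟩ ⟨by linarith, h⟩ (by linarith)).le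
    calc min (Real.sin (g / 2)) (Real.sin (ωT / 2)) ≤ Real.sin (g / 2) := min_le_left _ _
    _ ≤ Real.sin a := hs
    _ ≤ |Real.sin a| := le_abs_self _
  · rcases le_or_gt a (Real.pi + Real.pi / 2) with h' | h'
    · exact Or.inl (Real.cos_nonpos_of_pi_div_two_le_of_le h.le h')
    · right
      have hβ : Real.pi / 2 < Real.pi - ωT := by linarith
      set b := 2 * Real.pi - a with hb
      have hb1 : ωT < b := by simp only [hb]; linarith
      have hb2 : b < Real.pi / 2 := by simp only [hb]; linarith
      have hsb : Real.sin (ωT / 2) ≤ Real.sin b := by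
        apply (Real.strictMonoOn_sin ⟨by linarith, by linarith⟩
          ⟨by linarith, hb2.le⟩ (by linarith)).le
      have hsab : Real.sin b = -Real.sin a := by
        simp [hb, Real.sin_sub, Real.sin_two_pi, Real.cos_two_pi]
      calc min (Real.sin (g / 2)) (Real.sin (ωT / 2)) ≤ Real.sin (ωT / 2) := min_le_right _ _
      _ ≤ Real.sin b := hsb
      _ = -Real.sin a := hsab
      _ ≤ |Real.sin a| := by rw [← abs_neg]; exact le_abs_self _

lemma key_norm (ωT ω' : ℝ) (h1 : 0 < ωT) (h2 : ωT < Real.pi)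
    (h3 : max ωT (Real.pi - ωT) < ω') (h4 : ω' < Real.pi)
    (z lam : ℂ) (hz : z ≠ 0) (hzarg : |z.arg| + ωT < Real.pi)
    (hlam : lam ≠ 0) (hlarg : ω' < |lam.arg|) :
    min (Real.sin ((ω' - (Real.pi - ωT)) / 2)) (Real.sin (ωT / 2)) * ‖lam‖ ≤
      ‖lam - z‖ := by
  set c := min (Real.sin ((ω' - (Real.pi - ωT)) / 2)) (Real.sin (ωT / 2)) with hc
  set θ := lam.arg with hθ
  set φ := z.arg with hφ
  set α := θ - φ with hα
  have hq0 : 0 < ‖z‖ := norm_pos_iff.mpr hz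
  have hr0 : 0 < ‖lam‖ := norm_pos_iff.mpr hlam
  -- |α| bounds
  have habs1 : ω' - (Real.pi - ωT) < |α| := by
    have := abs_sub_abs_le_abs_sub θ φ
    have hφβ : |φ| < Real.pi - ωT := by rw [hφ]; linarith
    have := Complex.abs_arg_le_pi lam
    linarith [abs_sub_abs_le_abs_sub θ φ]
  have habs2 : |α| < Real.pi + (Real.pi - ωT) := by
    have h5 := abs_sub θ φ
    have hφβ : |φ| < Real.pi - ωT := by rw [hφ]; linarith
    have h6 := Complex.abs_arg_le_pi lam
    rw [← hθ] at h6
    linarith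
  -- im and re identities
  have him : (lam * (starRingEnd ℂ) z).im = ‖lam‖ * ‖z‖ * Real.sin α := by
    rw [hα, Real.sin_sub, hθ, hφ, Complex.sin_arg, Complex.sin_arg,
      Complex.cos_arg hz, Complex.cos_arg hlam]
    simp only [Complex.mul_im, Complex.conj_re, Complex.conj_im]
    field_simp
    ring
  have hre : (z * (starRingEnd ℂ) lam).re = ‖lam‖ * ‖z‖ * Real.cos α := by
    rw [hα, Real.cos_sub, hθ, hφ, Complex.sin_arg, Complex.sin_arg,
      Complex.cos_arg hz, Complex.cos_arg hlam]
    simp only [Complex.mul_re, Complex.conj_re, Complex.conj_im]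
    field_simp
    ring
  -- A1 : abs lam * |sin α| ≤ abs (lam - z)
  have hA1 : ‖lam‖ * |Real.sin α| ≤ ‖lam - z‖ := by
    have e1 : ((lam - z) * (starRingEnd ℂ) z).im = (lam * (starRingEnd ℂ) z).im := by
      simp [sub_mul, Complex.sub_im, Complex.mul_conj]
    have e2 : |((lam - z) * (starRingEnd ℂ) z).im| ≤ ‖lam - z‖ * ‖z‖ := by
      calc |((lam - z) * (starRingEnd ℂ) z).im| ≤ ‖(lam - z) * (starRingEnd ℂ) z‖ :=
          Complex.abs_im_le_norm _
      _ = ‖lam - z‖ * ‖z‖ := by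
          rw [norm_mul, Complex.norm_conj]
    rw [e1, him] at e2
    rw [show ‖lam‖ * ‖z‖ * Real.sin α =
        ‖lam‖ * ‖z‖ * Real.sin α from rfl, abs_mul,
      abs_of_nonneg (mul_nonneg hr0.le hq0.le)] at e2
    apply le_of_mul_le_mul_right ?_ hq0
    calc ‖lam‖ * |Real.sin α| * ‖z‖
        = ‖lam‖ * ‖z‖ * |Real.sin α| := by ring
    _ ≤ ‖lam - z‖ * ‖z‖ := e2
  -- A2 : cos α ≤ 0 → abs lam ≤ abs (lam - z)
  have hA2 : Real.cos α ≤ 0 → ‖lam‖ ≤ ‖lam - z‖ := by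
    intro hcos
    have e1 : ((lam - z) * (starRingEnd ℂ) lam).re =
        ‖lam‖ ^ 2 - ‖lam‖ * ‖z‖ * Real.cos α := by
      have : (lam * (starRingEnd ℂ) lam).re = ‖lam‖ ^ 2 := by
        rw [Complex.mul_conj, Complex.ofReal_re, Complex.normSq_eq_norm_sq]
      simp only [sub_mul, Complex.sub_re, this, hre]
    have e2 : ((lam - z) * (starRingEnd ℂ) lam).re ≤ ‖lam - z‖ * ‖lam‖ := by
      calc ((lam - z) * (starRingEnd ℂ) lam).re ≤ ‖(lam - z) * (starRingEnd ℂ) lam‖ :=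
          Complex.re_le_norm _
      _ = ‖lam - z‖ * ‖lam‖ := by rw [norm_mul, Complex.norm_conj]
    rw [e1] at e2
    nlinarith [mul_nonneg (mul_nonneg hr0.le hq0.le) (neg_nonneg.2 hcos)]
  -- conclude
  have hc1 : c ≤ 1 := le_trans (min_le_left _ _) (Real.sin_le_one _)
  rcases trig_bound ωT ω' |α| h1 h2 h3 h4 habs1 habs2 with hcos | hsin
  · rw [Real.cos_abs] at hcos
    calc c * ‖lam‖ ≤ 1 * ‖lam‖ :=
        mul_le_mul_of_nonneg_right hc1 hr0.le
    _ = ‖lam‖ := one_mul _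
    _ ≤ ‖lam - z‖ := hA2 hcos
  · have hsa : |Real.sin (|α|)| = |Real.sin α| := by
      rcases abs_choice α with h | h
      · rw [h]
      · rw [h, Real.sin_neg, abs_neg]
    rw [hsa] at hsin
    calc c * ‖lam‖ ≤ |Real.sin α| * ‖lam‖ :=
        mul_le_mul_of_nonneg_right hsin hr0.le
    _ = ‖lam‖ * |Real.sin α| := mul_comm _ _
    _ ≤ ‖lam - z‖ := hA1


theorem stmt_7 (X : Type*) [NormedAddCommGroup X] [NormedSpace ℂ X] [CompleteSpace X]
    (T : X →L[ℂ] X) (ωT : ℝ) (hωT : ωT ∈ Set.Ioo 0 Real.pi) (M : ℝ) (hM : 0 < M)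
    (hres : ∀ μ : ℂ, μ ≠ 0 → ωT < |μ.arg| →
      IsUnit (T - μ • (1 : X →L[ℂ] X)) ∧
        ‖Ring.inverse (T - μ • (1 : X →L[ℂ] X))‖ ≤ M / ‖μ‖) :
    ∀ z : ℂ, z ≠ 0 → |z.arg| + ωT < Real.pi →
      spectrum ℂ (T + z • (1 : X →L[ℂ] X)) ⊆
          {ζ : ℂ | ζ = 0 ∨ |ζ.arg| ≤ max ωT (Real.pi - ωT)} ∧
      ∀ ω' : ℝ, ω' ∈ Set.Ioo (max ωT (Real.pi - ωT)) Real.pi →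
        ∀ lam : ℂ, lam ≠ 0 → ω' < |lam.arg| →
          IsUnit (T + z • (1 : X →L[ℂ] X) - lam • (1 : X →L[ℂ] X)) ∧
            ‖Ring.inverse (T + z • (1 : X →L[ℂ] X) - lam • (1 : X →L[ℂ] X))‖ ≤
              (M / min (Real.sin ((ω' - (Real.pi - ωT)) / 2)) (Real.sin (Real.pi - ωT / 2)))
                / ‖lam‖ := by
  obtain ⟨hωT0, hωTπ⟩ := hωT
  have hπ := Real.pi_pos
  intro z hz hzarg
  have key : ∀ ω' : ℝ, max ωT (Real.pi - ωT) < ω' → ω' < Real.pi →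
      ∀ lam : ℂ, lam ≠ 0 → ω' < |lam.arg| →
      IsUnit (T + z • (1 : X →L[ℂ] X) - lam • (1 : X →L[ℂ] X)) ∧
        ‖Ring.inverse (T + z • (1 : X →L[ℂ] X) - lam • (1 : X →L[ℂ] X))‖ ≤
          (M / min (Real.sin ((ω' - (Real.pi - ωT)) / 2)) (Real.sin (ωT / 2)))
            / ‖lam‖ := by
    intro ω' h3 h4 lam hlam hlarg
    set μ := lam - z with hμ
    have hμre := key_arg ωT ω' hωT0 hωTπ h3 h4 z lam hz hzarg hlam hlarg
    have hμ0 : μ ≠ 0 := by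
      intro h0
      rw [← hμ, h0] at hμre
      simp at hμre
    have hμarg : ωT < |μ.arg| := (arg_lt_iff μ hμ0 ωT hωT0.le hωTπ.le).mp hμre
    obtain ⟨hu, hb⟩ := hres μ hμ0 hμarg
    have hop : T + z • (1 : X →L[ℂ] X) - lam • (1 : X →L[ℂ] X) =
        T - μ • (1 : X →L[ℂ] X) := by
      rw [hμ, sub_smul]
      abel
    refine ⟨hop ▸ hu, ?_⟩
    rw [hop]
    set c := min (Real.sin ((ω' - (Real.pi - ωT)) / 2)) (Real.sin (ωT / 2)) with hc
    have hcn : c * ‖lam‖ ≤ ‖μ‖ :=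
      key_norm ωT ω' hωT0 hωTπ h3 h4 z lam hz hzarg hlam hlarg
    have hg0 : 0 < ω' - (Real.pi - ωT) := by
      have := le_max_right ωT (Real.pi - ωT); linarith
    have hc0 : 0 < c := by
      apply lt_min
      · apply Real.sin_pos_of_pos_of_lt_pi <;> [linarith; linarith]
      · apply Real.sin_pos_of_pos_of_lt_pi <;> [linarith; linarith]
    have hr0 : 0 < ‖lam‖ := norm_pos_iff.mpr hlam
    calc ‖Ring.inverse (T - μ • (1 : X →L[ℂ] X))‖ ≤ M / ‖μ‖ := hb
    _ ≤ M / (c * ‖lam‖) :=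
        div_le_div_of_nonneg_left hM.le (by positivity) hcn
    _ = (M / c) / ‖lam‖ := by rw [div_div]
  constructor
  · intro ζ hζ
    by_contra hmem
    simp only [Set.mem_setOf_eq] at hmem
    push_neg at hmem
    obtain ⟨hζ0, hζarg⟩ := hmem
    set m := max ωT (Real.pi - ωT) with hm
    have hmπ : m < Real.pi := by
      apply max_lt <;> linarith
    have h3 : m < (m + |ζ.arg|) / 2 := by linarith
    have h4 : (m + |ζ.arg|) / 2 < Real.pi := by
      have := Complex.abs_arg_le_pi ζ; linarith
    have h5 : (m + |ζ.arg|) / 2 < |ζ.arg| := by linarith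
    have hu := (key ((m + |ζ.arg|) / 2) h3 h4 ζ hζ0 h5).1
    rw [spectrum.mem_iff] at hζ
    apply hζ
    have heq : (algebraMap ℂ (X →L[ℂ] X)) ζ - (T + z • (1 : X →L[ℂ] X)) =
        -(T + z • (1 : X →L[ℂ] X) - ζ • (1 : X →L[ℂ] X)) := by
      rw [Algebra.algebraMap_eq_smul_one]
      abel
    rw [heq]
    exact hu.neg
  · intro ω' hω' lam hlam hlarg
    have h := key ω' hω'.1 hω'.2 lam hlam hlarg
    rwa [show Real.sin (Real.pi - ωT / 2) = Real.sin (ωT / 2) from Real.sin_pi_sub _]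
end

section
/- Let X be a complex Banach space and T a bounded linear operator on X such that the spectrum of T is contained in the open left half-plane {w ∈ ℂ : Re w < 0}, and such that there exist constants M, δ > 0 with ‖exp(sT)‖ ≤ M e^{−δs} for all s ≥ 0. Then for every ξ ∈ ℝ, the operator T² + 4π²ξ²·I is invertible, the operator-valued function x ↦ exp(|x|T) is Bochner integrable on ℝ, and ∫_ℝ e^{−2πiξx} exp(|x|T) dx = −2T (T² + 4π²ξ²·I)⁻¹. -/
open MeasureTheory Set Filter NormedSpace Topology

set_option maxHeartbeats 1000000
set_option synthInstance.maxHeartbeats 200000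

section Aux

variable {X : Type*} [NormedAddCommGroup X] [NormedSpace ℂ X] [CompleteSpace X]

lemma aux_deriv (S : X →L[ℂ] X) (x : ℝ) :
    HasDerivAt (fun y : ℝ => exp ((y : ℂ) • S)) (S * exp ((x : ℂ) • S)) x := by
  have h := (hasDerivAt_exp_smul_const' (𝕂 := ℂ) S (x : ℂ))
  have h2 := (h.hasFDerivAt.restrictScalars ℝ).comp x Complex.ofRealCLM.hasFDerivAt
  simpa [Function.comp_def] using h2.hasDerivAt

lemma aux_key (S : X →L[ℂ] X) (M δ : ℝ) (hδ : 0 < δ)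
    (hbound : ∀ x : ℝ, 0 ≤ x → ‖exp ((x : ℂ) • S)‖ ≤ M * Real.exp (-δ * x)) :
    IntegrableOn (fun x : ℝ => exp ((x : ℂ) • S)) (Ioi 0) ∧
      S * (∫ x in Ioi (0:ℝ), exp ((x : ℂ) • S)) = -1 := by
  letI : NormedAlgebra ℚ (X →L[ℂ] X) := .restrictScalars ℚ ℂ _
  have hcont : Continuous (fun x : ℝ => exp ((x : ℂ) • S)) :=
    exp_continuous.comp (Complex.continuous_ofReal.smul continuous_const)
  have hgint : IntegrableOn (fun x : ℝ => M * Real.exp (-δ * x)) (Ioi 0) :=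
    (exp_neg_integrableOn_Ioi 0 hδ).const_mul M
  have hae : ∀ᵐ (x : ℝ) ∂(volume.restrict (Ioi (0:ℝ))),
      ‖exp ((x : ℂ) • S)‖ ≤ M * Real.exp (-δ * x) := by
    filter_upwards [ae_restrict_mem measurableSet_Ioi] with x hx
    exact hbound x (le_of_lt hx)
  have hint : IntegrableOn (fun x : ℝ => exp ((x : ℂ) • S)) (Ioi 0) :=
    Integrable.mono' hgint (hcont.aestronglyMeasurable.restrict) hae
  refine ⟨hint, ?_⟩
  have hderiv : ∀ x ∈ Ici (0:ℝ),
      HasDerivAt (fun y : ℝ => exp ((y : ℂ) • S)) (S * exp ((x : ℂ) • S)) x :=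
    fun x _ => aux_deriv S x
  set L : (X →L[ℂ] X) →L[ℂ] (X →L[ℂ] X) := ContinuousLinearMap.mul ℂ (X →L[ℂ] X) S with hL
  have hint' : IntegrableOn (fun x : ℝ => S * exp ((x : ℂ) • S)) (Ioi 0) :=
    L.integrable_comp hint
  have htend : Tendsto (fun x : ℝ => exp ((x : ℂ) • S)) atTop (𝓝 0) := by
    refine squeeze_zero_norm' (a := fun x : ℝ => M * Real.exp (-δ * x)) ?_ ?_
    · filter_upwards [eventually_ge_atTop (0:ℝ)] with x hx using hbound x hx
    · have h1 : Tendsto (fun x : ℝ => -δ * x) atTop atBot := by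
        have h := tendsto_neg_atTop_atBot.comp
          (tendsto_id (α := ℝ) |>.const_mul_atTop hδ)
        simpa [Function.comp_def, neg_mul] using h
      simpa using (Real.tendsto_exp_atBot.comp h1).const_mul M
  have key := integral_Ioi_of_hasDerivAt_of_tendsto' hderiv hint' htend
  have h0 : exp (((0:ℝ) : ℂ) • S) = 1 := by simp [exp_zero]
  rw [h0, zero_sub] at key
  calc S * (∫ x in Ioi (0:ℝ), exp ((x : ℂ) • S))
      = L (∫ x in Ioi (0:ℝ), exp ((x : ℂ) • S)) := rfl
    _ = ∫ x in Ioi (0:ℝ), L (exp ((x : ℂ) • S)) := (L.integral_comp_comm hint).symm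
    _ = ∫ x in Ioi (0:ℝ), S * exp ((x : ℂ) • S) := rfl
    _ = -1 := key

lemma aux_exp_shift (T : X →L[ℂ] X) (w : ℂ) (x : ℝ) :
    exp ((x : ℂ) • (T + w • (1 : X →L[ℂ] X)))
      = Complex.exp ((x : ℂ) * w) • exp ((x : ℂ) • T) := by
  have h1 : (x : ℂ) • (T + w • (1 : X →L[ℂ] X))
      = (x : ℂ) • T + ((x : ℂ) * w) • (1 : X →L[ℂ] X) := by
    rw [smul_add, smul_smul]
  have hc : Commute ((x : ℂ) • T) (((x : ℂ) * w) • (1 : X →L[ℂ] X)) :=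
    ((Commute.one_right T).smul_left _).smul_right _
  letI : NormedAlgebra ℚ (X →L[ℂ] X) := .restrictScalars ℚ ℂ _
  rw [h1, exp_add_of_commute hc]
  have h2 : ((x : ℂ) * w) • (1 : X →L[ℂ] X)
      = algebraMap ℂ (X →L[ℂ] X) ((x : ℂ) * w) := (Algebra.algebraMap_eq_smul_one _).symm
  rw [h2, ← algebraMap_exp_comm, Algebra.algebraMap_eq_smul_one, mul_smul_comm, mul_one, Complex.exp_eq_exp_ℂ]

end Aux

theorem stmt_9 (X : Type*) [NormedAddCommGroup X] [NormedSpace ℂ X] [CompleteSpace X]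
    (T : X →L[ℂ] X) (hspec : spectrum ℂ T ⊆ {w : ℂ | w.re < 0})
    (M δ : ℝ) (hM : 0 < M) (hδ : 0 < δ)
    (hdecay : ∀ s : ℝ, 0 ≤ s →
      ‖NormedSpace.exp ((s : ℂ) • T)‖ ≤ M * Real.exp (-δ * s)) (ξ : ℝ) :
    IsUnit (T ^ 2 + ((4 * Real.pi ^ 2 * ξ ^ 2 : ℝ) : ℂ) • (1 : X →L[ℂ] X)) ∧
    MeasureTheory.Integrable (fun x : ℝ => NormedSpace.exp (((|x| : ℝ) : ℂ) • T)) ∧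
    ∫ x : ℝ, Complex.exp (-2 * Real.pi * Complex.I * ξ * x) •
        NormedSpace.exp (((|x| : ℝ) : ℂ) • T) =
      (-2 : ℂ) • (T * Ring.inverse
        (T ^ 2 + ((4 * Real.pi ^ 2 * ξ ^ 2 : ℝ) : ℂ) • (1 : X →L[ℂ] X))) := by
  classical
  letI : NormedAlgebra ℚ (X →L[ℂ] X) := .restrictScalars ℚ ℂ _
  set c : ℝ := 2 * Real.pi * ξ with hc
  set z : ℂ := (c : ℂ) * Complex.I with hz
  have hzre : z.re = 0 := by simp [hz]
  -- units from the spectrum hypothesis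
  have hunit : ∀ w : ℂ, w.re = 0 → IsUnit (T + w • (1 : X →L[ℂ] X)) := by
    intro w hw
    have hw' : (-w) ∉ spectrum ℂ T := by
      intro h
      have := hspec h
      simp only [Set.mem_setOf_eq, Complex.neg_re, hw, neg_zero] at this
      exact lt_irrefl 0 this
    have h1 := spectrum.notMem_iff.mp hw'
    have h2 : IsUnit (-(algebraMap ℂ (X →L[ℂ] X) (-w) - T)) := h1.neg
    have h3 : -(algebraMap ℂ (X →L[ℂ] X) (-w) - T) = T + w • (1 : X →L[ℂ] X) := by
      rw [Algebra.algebraMap_eq_smul_one, neg_sub, neg_smul, sub_neg_eq_add]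
    rwa [h3] at h2
  have hup : IsUnit (T + z • (1 : X →L[ℂ] X)) := hunit z hzre
  have hum : IsUnit (T + (-z) • (1 : X →L[ℂ] X)) := hunit (-z) (by simp [hzre])
  -- decay bound for shifted operators
  have hbnd : ∀ w : ℂ, w.re = 0 → ∀ x : ℝ, 0 ≤ x →
      ‖exp ((x : ℂ) • (T + w • (1 : X →L[ℂ] X)))‖ ≤ M * Real.exp (-δ * x) := by
    intro w hw x hx
    rw [aux_exp_shift]
    rw [norm_smul (Complex.exp ((x:ℂ)*w)) (exp ((x:ℂ) • T))]
    have hre : ((x : ℂ) * w).re = 0 := by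
      simp [Complex.mul_re, hw]
    have h1 : ‖Complex.exp ((x : ℂ) * w)‖ = 1 := by
      rw [Complex.norm_exp, hre, Real.exp_zero]
    rw [h1, one_mul]
    exact hdecay x hx
  obtain ⟨hintp, heqp⟩ := aux_key (T + z • (1 : X →L[ℂ] X)) M δ hδ (hbnd z hzre)
  obtain ⟨hintm, heqm⟩ := aux_key (T + (-z) • (1 : X →L[ℂ] X)) M δ hδ
    (hbnd (-z) (by simp [hzre]))
  obtain ⟨hintT, _⟩ := aux_key T M δ hδ hdecay
  set vp : X →L[ℂ] X := ↑hup.unit⁻¹ with hvp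
  set vm : X →L[ℂ] X := ↑hum.unit⁻¹ with hvm
  have hinv : ∀ (S : X →L[ℂ] X) (hu : IsUnit S) (J : X →L[ℂ] X),
      S * J = -1 → J = -(↑hu.unit⁻¹ : X →L[ℂ] X) := by
    intro S hu J h
    have h1 : (↑hu.unit⁻¹ : X →L[ℂ] X) * S = 1 := hu.val_inv_mul
    calc J = ((↑hu.unit⁻¹ : X →L[ℂ] X) * S) * J := by rw [h1, one_mul]
      _ = (↑hu.unit⁻¹ : X →L[ℂ] X) * (S * J) := by rw [mul_assoc]
      _ = (↑hu.unit⁻¹ : X →L[ℂ] X) * (-1) := by rw [h]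
      _ = -(↑hu.unit⁻¹ : X →L[ℂ] X) := by rw [mul_neg, mul_one]
  have hJp : (∫ x in Ioi (0:ℝ), exp ((x : ℂ) • (T + z • (1 : X →L[ℂ] X)))) = -vp :=
    hinv _ hup _ heqp
  have hJm : (∫ x in Ioi (0:ℝ), exp ((x : ℂ) • (T + (-z) • (1 : X →L[ℂ] X)))) = -vm :=
    hinv _ hum _ heqm
  -- scalar identity
  have hsc : (-z) * z = ((4 * Real.pi ^ 2 * ξ ^ 2 : ℝ) : ℂ) := by
    rw [hz, hc]
    have : (-(((2 * Real.pi * ξ : ℝ) : ℂ) * Complex.I)) *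
        (((2 * Real.pi * ξ : ℝ) : ℂ) * Complex.I) =
        -(((2 * Real.pi * ξ : ℝ) : ℂ)^2 * (Complex.I * Complex.I)) := by ring
    rw [this, Complex.I_mul_I]
    push_cast
    ring
  -- factorization of P
  have hP : (T + z • (1 : X →L[ℂ] X)) * (T + (-z) • (1 : X →L[ℂ] X))
      = T ^ 2 + ((4 * Real.pi ^ 2 * ξ ^ 2 : ℝ) : ℂ) • (1 : X →L[ℂ] X) := by
    have e : (T + z • (1 : X →L[ℂ] X)) * (T + (-z) • (1 : X →L[ℂ] X))
        = T * T + ((-z) * z) • (1 : X →L[ℂ] X) + ((-z) • T + z • T) := by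
      simp only [mul_add, add_mul, smul_mul_assoc, mul_smul_comm, mul_one, one_mul, smul_smul,
        smul_add]
      abel
    rw [e, hsc, neg_smul, neg_add_cancel, add_zero, ← sq]
  have hPunit : IsUnit (T ^ 2 + ((4 * Real.pi ^ 2 * ξ ^ 2 : ℝ) : ℂ) • (1 : X →L[ℂ] X)) := by
    rw [← hP]; exact hup.mul hum
  -- integrability of x ↦ exp(|x| • T)
  have hGIoi : IntegrableOn (fun x : ℝ => exp (((|x| : ℝ) : ℂ) • T)) (Ioi 0) := by
    refine hintT.congr_fun (fun x hx => ?_) measurableSet_Ioi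
    rw [abs_of_pos hx]
  have hGIic : IntegrableOn (fun x : ℝ => exp (((|x| : ℝ) : ℂ) • T)) (Iic 0) := by
    rw [← Measure.map_neg_eq_self (volume : Measure ℝ)]
    have m : MeasurableEmbedding fun x : ℝ => -x :=
      (Homeomorph.neg ℝ).measurableEmbedding
    rw [m.integrableOn_map_iff]
    simp_rw [Function.comp_def, abs_neg, neg_preimage, neg_Iic, neg_zero]
    exact (integrableOn_Ici_iff_integrableOn_Ioi
      (f := fun x : ℝ => exp (((|x| : ℝ) : ℂ) • T)) (hb := enorm_ne_top)).mpr hGIoi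
  have hG : Integrable (fun x : ℝ => exp (((|x| : ℝ) : ℂ) • T)) := by
    have h := hGIic.union hGIoi
    rwa [Iic_union_Ioi, integrableOn_univ] at h
  -- the full integrand
  set f : ℝ → (X →L[ℂ] X) := fun x => Complex.exp (-2 * Real.pi * Complex.I * ξ * x) •
      exp (((|x| : ℝ) : ℂ) • T) with hfdef
  have hphase : ∀ x : ℝ, ‖Complex.exp (-2 * Real.pi * Complex.I * ξ * x)‖ = 1 := by
    intro x
    have h1 : (-2 * Real.pi * Complex.I * ξ * x : ℂ)
        = ((-2 * Real.pi * ξ * x : ℝ) : ℂ) * Complex.I := by push_cast; ring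
    rw [Complex.norm_exp, h1]
    simp
  have hnorm : ∀ x : ℝ, ‖f x‖ = ‖exp (((|x| : ℝ) : ℂ) • T)‖ := by
    intro x
    rw [hfdef]
    rw [norm_smul (Complex.exp (-2 * Real.pi * Complex.I * ξ * x))
      (exp (((|x| : ℝ) : ℂ) • T)), hphase, one_mul]
  have hfcont : Continuous f := by
    refine Continuous.smul (f := fun x : ℝ => Complex.exp (-2 * Real.pi * Complex.I * ξ * x))
      (g := fun x : ℝ => exp (((|x| : ℝ) : ℂ) • T)) ?_ ?_
    · exact Complex.continuous_exp.comp (continuous_const.mul Complex.continuous_ofReal)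
    · exact exp_continuous.comp
        ((Complex.continuous_ofReal.comp continuous_abs).smul continuous_const)
  have hfint : Integrable f := by
    refine Integrable.mono' hG.norm hfcont.aestronglyMeasurable (ae_of_all _ fun x => ?_)
    rw [hnorm x]
  refine ⟨hPunit, hG, ?_⟩
  -- compute the two half-line integrals
  have hIoi : ∫ x in Ioi (0:ℝ), f x = -vm := by
    rw [← hJm]
    refine setIntegral_congr_fun measurableSet_Ioi (fun x hx => ?_)
    rw [hfdef]
    have h1 : exp ((x : ℂ) • (T + (-z) • (1 : X →L[ℂ] X)))
        = Complex.exp ((x : ℂ) * (-z)) • exp ((x : ℂ) • T) := aux_exp_shift T (-z) x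
    have h2 : ((x : ℂ) * (-z)) = -2 * Real.pi * Complex.I * ξ * x := by
      rw [hz, hc]; push_cast; ring
    have h3 : (|x| : ℝ) = x := abs_of_pos hx
    simp only [h3]
    rw [h1, h2]
  have hIic : ∫ x in Iic (0:ℝ), f x = -vp := by
    have h0 : ∫ x in Iic ((0:ℝ)), f x = ∫ x in Ioi (0:ℝ), f (-x) := by
      rw [integral_comp_neg_Ioi, neg_zero]
    rw [h0, ← hJp]
    refine setIntegral_congr_fun measurableSet_Ioi (fun x hx => ?_)
    rw [hfdef]
    have h1 : exp ((x : ℂ) • (T + z • (1 : X →L[ℂ] X)))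
        = Complex.exp ((x : ℂ) * z) • exp ((x : ℂ) • T) := aux_exp_shift T z x
    have h2 : ((x : ℂ) * z) = -2 * Real.pi * Complex.I * ξ * (-x : ℝ) := by
      rw [hz, hc]; push_cast; ring
    have h3 : (|(-x)| : ℝ) = x := by rw [abs_neg, abs_of_pos hx]
    simp only [h3]
    rw [h1, h2]
  have hsplit : ∫ x : ℝ, f x = -vp + -vm := by
    rw [← intervalIntegral.integral_Iic_add_Ioi (b := (0:ℝ)) hfint.integrableOn hfint.integrableOn,
      hIic, hIoi]
  -- identify the inverse
  have hPinv : Ring.inverse (T ^ 2 + ((4 * Real.pi ^ 2 * ξ ^ 2 : ℝ) : ℂ) • (1 : X →L[ℂ] X))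
      = vm * vp := by
    have huval : ((hup.unit * hum.unit : (X →L[ℂ] X)ˣ) : X →L[ℂ] X)
        = T ^ 2 + ((4 * Real.pi ^ 2 * ξ ^ 2 : ℝ) : ℂ) • (1 : X →L[ℂ] X) := by
      rw [Units.val_mul, hup.unit_spec, hum.unit_spec, hP]
    rw [← huval, Ring.inverse_unit, mul_inv_rev, Units.val_mul]
  -- final algebra
  have hcTm : Commute (T + z • (1 : X →L[ℂ] X)) (T + (-z) • (1 : X →L[ℂ] X)) := by
    have c1 : Commute T ((-z) • (1 : X →L[ℂ] X)) := (Commute.one_right T).smul_right _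
    have c2 : Commute (z • (1 : X →L[ℂ] X)) T := (Commute.one_left T).smul_left _
    have c3 : Commute (z • (1 : X →L[ℂ] X)) ((-z) • (1 : X →L[ℂ] X)) :=
      ((Commute.refl (1 : X →L[ℂ] X)).smul_left _).smul_right _
    exact ((Commute.refl T).add_right c1).add_left (c2.add_right c3)
  have hcomm : Commute (T + z • (1 : X →L[ℂ] X)) vm := by
    have h := (hum.unit_spec.symm ▸ hcTm :
      Commute (T + z • (1 : X →L[ℂ] X)) (↑hum.unit : X →L[ℂ] X))
    exact h.units_inv_right
  have e1 : (T + z • (1 : X →L[ℂ] X)) * (vm * vp) = vm := by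
    rw [← mul_assoc, hcomm.eq, mul_assoc, hup.mul_val_inv, mul_one]
  have e2 : (T + (-z) • (1 : X →L[ℂ] X)) * (vm * vp) = vp := by
    rw [← mul_assoc, hum.mul_val_inv, one_mul]
  have e3 : (2 : ℂ) • T = (T + z • (1 : X →L[ℂ] X)) + (T + (-z) • (1 : X →L[ℂ] X)) := by
    rw [two_smul, neg_smul]; abel
  have halg : (-2 : ℂ) • (T * (vm * vp)) = -vp + -vm := by
    have h1 : (-2 : ℂ) • (T * (vm * vp)) = -(((2:ℂ) • T) * (vm * vp)) := by
      rw [smul_mul_assoc, ← neg_smul]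
    rw [h1, e3, add_mul, e1, e2]
    abel
  rw [hsplit, hPinv, halg]
end

section
/- Let θ ∈ (0, π/2), ρ ≥ 0 and C > 0. Then |ρ² e^{2iθ} + C² ρ e^{iθ} − C³| ≥ (ρ² + C³) · sin(θ/2) · cos(θ/2). -/
theorem stmt_11 (θ ρ C : ℝ) (hθ : θ ∈ Set.Ioo 0 (Real.pi / 2)) (hρ : 0 ≤ ρ) (hC : 0 < C) :
    (ρ ^ 2 + C ^ 3) * Real.sin (θ / 2) * Real.cos (θ / 2) ≤
      ‖(ρ : ℂ) ^ 2 * Complex.exp (2 * Complex.I * θ) +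
        (C : ℂ) ^ 2 * ρ * Complex.exp (Complex.I * θ) - (C : ℂ) ^ 3‖ := by
  obtain ⟨hθ0, hθ1⟩ := hθ
  set z : ℂ := (ρ : ℂ) ^ 2 * Complex.exp (2 * Complex.I * θ) +
      (C : ℂ) ^ 2 * ρ * Complex.exp (Complex.I * θ) - (C : ℂ) ^ 3 with hz
  have h1 : ‖z‖ = ‖z * Complex.exp (-(Complex.I * θ))‖ := by
    rw [norm_mul, Complex.norm_exp]
    simp
  have hsplit : z * Complex.exp (-(Complex.I * θ)) =
      (ρ : ℂ) ^ 2 * Complex.exp (Complex.I * θ) + (C : ℂ) ^ 2 * ρ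
        - (C : ℂ) ^ 3 * Complex.exp (-(Complex.I * θ)) := by
    have e1 : Complex.exp (2 * Complex.I * θ) * Complex.exp (-(Complex.I * θ)) =
        Complex.exp (Complex.I * θ) := by rw [← Complex.exp_add]; ring_nf
    have e2 : Complex.exp (Complex.I * θ) * Complex.exp (-(Complex.I * θ)) = 1 := by
      rw [← Complex.exp_add]; simp
    rw [hz]; linear_combination (ρ : ℂ) ^ 2 * e1 + (C : ℂ) ^ 2 * ρ * e2
  have h2 : (z * Complex.exp (-(Complex.I * θ))).im = (ρ ^ 2 + C ^ 3) * Real.sin θ := by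
    rw [hsplit]
    simp [Complex.exp_im, Complex.exp_re, Complex.sub_im, Complex.add_im, Complex.mul_im,
      Complex.mul_re, ← Complex.ofReal_pow, Complex.ofReal_re, Complex.ofReal_im]
    ring
  have h3 : (ρ ^ 2 + C ^ 3) * Real.sin θ ≤ ‖z‖ := by
    rw [h1]
    calc (ρ ^ 2 + C ^ 3) * Real.sin θ = (z * Complex.exp (-(Complex.I * θ))).im := h2.symm
      _ ≤ |(z * Complex.exp (-(Complex.I * θ))).im| := le_abs_self _
      _ ≤ ‖z * Complex.exp (-(Complex.I * θ))‖ := Complex.abs_im_le_norm _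
  have hsin : Real.sin θ = 2 * Real.sin (θ / 2) * Real.cos (θ / 2) := by
    rw [← Real.sin_two_mul]; ring_nf
  have hs : 0 ≤ Real.sin (θ / 2) := Real.sin_nonneg_of_nonneg_of_le_pi (by linarith)
    (by nlinarith [Real.pi_pos])
  have hc : 0 ≤ Real.cos (θ / 2) := Real.cos_nonneg_of_mem_Icc
    ⟨by nlinarith [Real.pi_pos], by nlinarith [Real.pi_pos]⟩
  have hsum : 0 ≤ ρ ^ 2 + C ^ 3 := by positivity
  nlinarith [mul_nonneg (mul_nonneg hsum hs) hc]
end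

section
/- Let X be a complex Banach space, a < b real numbers, c = b − a, and T an invertible bounded linear operator on X such that I − exp(2cT) is invertible. Let φ : ℝ → X be Bochner integrable on [a, b]. For x ∈ [a, b] define K(x) = ½ ( exp((b−x)T) exp(cT) − exp((x−a)T) ) (I − exp(2cT))⁻¹ T⁻¹ ∫_a^b exp((s−a)T) φ(s) ds + ½ ( exp((x−a)T) exp(cT) − exp((b−x)T) ) (I − exp(2cT))⁻¹ T⁻¹ ∫_a^b exp((b−s)T) φ(s) ds, and J(x) = ½ T⁻¹ ∫_a^b exp(|x−s|T) φ(s) ds. Then K(a) + J(a) = 0 and K(b) + J(b) = 0. -/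
open MeasureTheory NormedSpace

theorem stmt_13 (X : Type*) [NormedAddCommGroup X] [NormedSpace ℂ X] [CompleteSpace X]
    (a b c : ℝ) (hab : a < b) (hc : c = b - a)
    (T : X →L[ℂ] X) (hT : IsUnit T)
    (hinv : IsUnit ((1 : X →L[ℂ] X) - exp (((2 * c : ℝ) : ℂ) • T)))
    (φ : ℝ → X) (hφ : IntegrableOn φ (Set.Icc a b))
    (K J : ℝ → X)
    (hK : ∀ x : ℝ, K x =
      ((1 / 2 : ℂ) • ((exp (((b - x : ℝ) : ℂ) • T) * exp ((c : ℂ) • T) -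
            exp (((x - a : ℝ) : ℂ) • T)) *
          Ring.inverse ((1 : X →L[ℂ] X) - exp (((2 * c : ℝ) : ℂ) • T)) *
          Ring.inverse T))
        (∫ s in a..b, (exp (((s - a : ℝ) : ℂ) • T)) (φ s)) +
      ((1 / 2 : ℂ) • ((exp (((x - a : ℝ) : ℂ) • T) * exp ((c : ℂ) • T) -
            exp (((b - x : ℝ) : ℂ) • T)) *
          Ring.inverse ((1 : X →L[ℂ] X) - exp (((2 * c : ℝ) : ℂ) • T)) *
          Ring.inverse T))
        (∫ s in a..b, (exp (((b - s : ℝ) : ℂ) • T)) (φ s)))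
    (hJ : ∀ x : ℝ, J x =
      ((1 / 2 : ℂ) • Ring.inverse T)
        (∫ s in a..b, (exp (((|x - s| : ℝ) : ℂ) • T)) (φ s))) :
    K a + J a = 0 ∧ K b + J b = 0 := by
  subst hc
  set c := b - a with hc
  have hcomm : exp ((c : ℂ) • T) * exp ((c : ℂ) • T)
      = exp (((2 * c : ℝ) : ℂ) • T) := by
    letI : NormedAlgebra ℚ (X →L[ℂ] X) := NormedAlgebra.restrictScalars ℚ ℂ _
    rw [← exp_add_of_commute (Commute.refl ((c : ℂ) • T))]
    congr 1
    push_cast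
    rw [← add_smul]
    ring_nf
  have hcoef : (exp ((c : ℂ) • T) * exp ((c : ℂ) • T) - 1) *
      Ring.inverse ((1 : X →L[ℂ] X) - exp (((2 * c : ℝ) : ℂ) • T)) = -1 := by
    rw [hcomm, ← neg_sub, neg_mul, Ring.mul_inverse_cancel _ hinv]
  have hsa : exp (((a - a : ℝ) : ℂ) • T) = 1 := by simp
  have hsb : exp (((b - b : ℝ) : ℂ) • T) = 1 := by simp
  constructor
  · have hIa : (∫ s in a..b, (exp (((|a - s| : ℝ) : ℂ) • T)) (φ s))
        = ∫ s in a..b, (exp (((s - a : ℝ) : ℂ) • T)) (φ s) := by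
      apply intervalIntegral.integral_congr
      intro s hs
      rw [Set.uIcc_of_le hab.le] at hs
      dsimp only
      rw [abs_sub_comm, abs_of_nonneg (sub_nonneg.2 hs.1)]
    rw [hK, hJ, hIa, hsa]
    have hba : exp (((b - a : ℝ) : ℂ) • T) = exp ((c : ℂ) • T) := by rw [← hc]
    rw [hba, hcoef, one_mul, sub_self, zero_mul, zero_mul, smul_zero]
    simp only [neg_mul, one_mul, smul_neg, ContinuousLinearMap.neg_apply,
      ContinuousLinearMap.zero_apply, add_zero]
    abel
  · have hIb : (∫ s in a..b, (exp (((|b - s| : ℝ) : ℂ) • T)) (φ s))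
        = ∫ s in a..b, (exp (((b - s : ℝ) : ℂ) • T)) (φ s) := by
      apply intervalIntegral.integral_congr
      intro s hs
      rw [Set.uIcc_of_le hab.le] at hs
      dsimp only
      rw [abs_of_nonneg (sub_nonneg.2 hs.2)]
    rw [hK, hJ, hIb, hsb]
    have hba : exp (((b - a : ℝ) : ℂ) • T) = exp ((c : ℂ) • T) := by rw [← hc]
    rw [hba, hcoef, one_mul, sub_self, zero_mul, zero_mul, smul_zero]
    simp only [neg_mul, one_mul, smul_neg, ContinuousLinearMap.neg_apply,
      ContinuousLinearMap.zero_apply, zero_add]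
    abel
end
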